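/- arXiv:math/0502107 — 2 statements merged into one kernel-verified Lean document; each statement's English description precedes it below -/
import Mathlib

section
/- Let λ be a partition. For x ∈ P_λ define r(x) to be the number of inversions of the completed permutation σ_x. Then r is a rank function on the rook poset P_λ: r(0̂) = 0 where 0̂ = (1, 2, …, n) is the minimum of P_λ, and whenever y covers x in P_λ, one has r(y) = r(x) + 1. -/
namespace RookPoset

/-- A partition with `n` parts: `part i` is the (1-based) part `λ_{i+1}`.
The parts are weakly increasing and contain the staircase (`λ_i ≥ i`, 1-based),
which in particular makes them positive. -/
structure Partition (n : ℕ) where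
  part : Fin n → ℕ
  mono : Monotone part
  staircase : ∀ i : Fin n, (i : ℕ) + 1 ≤ part i

/-- The largest part; equals `λ_n` when `n > 0`. -/
def Partition.maxPart {n : ℕ} (lam : Partition n) : ℕ :=
  Finset.univ.sup lam.part

/-- The part `λ_k` in 1-based indexing, with the convention `λ_m = n + 1` for `m > n`. -/
def Partition.partAt {n : ℕ} (lam : Partition n) (k : ℕ) : ℕ :=
  if h : 1 ≤ k ∧ k ≤ n then lam.part ⟨k - 1, by omega⟩ else n + 1

/-- The GJW sequence `(λ_1 - 1, λ_2 - 2, …, λ_n - n)` of a partition. -/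
def Partition.gjw {n : ℕ} (lam : Partition n) : List ℕ :=
  (List.finRange n).map fun i => lam.part i - ((i : ℕ) + 1)

/-- A maximal rook placement on the Ferrers board of `lam`: `col i` is the (1-based)
column of the rook in the (1-based) row `i + 1` (rows indexed bottom-up). -/
structure Placement {n : ℕ} (lam : Partition n) where
  col : Fin n → ℕ
  inj : Function.Injective col
  pos : ∀ i, 1 ≤ col i
  le_part : ∀ i, col i ≤ lam.part i

/-- The increasingly sorted list of the values `x i` over indices `i` with `(i : ℕ) < j`,
i.e. the sorted initial segment `{x_1, …, x_j}` (1-based). -/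
def initSeg {n : ℕ} (x : Fin n → ℕ) (j : ℕ) : List ℕ :=
  ((Finset.univ.filter fun i : Fin n => (i : ℕ) < j).image x).sort (· ≤ ·)

/-- The rook poset order: `x ≤ y` iff each sorted initial segment of `x` is
componentwise at most the corresponding sorted initial segment of `y`. -/
def rle {n : ℕ} {lam : Partition n} (x y : Placement lam) : Prop :=
  ∀ j : ℕ, List.Forall₂ (· ≤ ·) (initSeg x.col j) (initSeg y.col j)

/-- `y` covers `x` in the rook poset. -/
def rcovers {n : ℕ} {lam : Partition n} (x y : Placement lam) : Prop :=
  rle x y ∧ x ≠ y ∧ ∀ z : Placement lam, rle x z → rle z y → z = x ∨ z = y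

/-- `y` covers `x` in the subposet induced on `S`. -/
def rcoversIn {n : ℕ} {lam : Partition n} (S : Set (Placement lam)) (x y : Placement lam) :
    Prop :=
  x ∈ S ∧ y ∈ S ∧ rle x y ∧ x ≠ y ∧ ∀ z ∈ S, rle x z → rle z y → z = x ∨ z = y

/-- `t` is the greedy placement `1̂`: for each row in turn (bottom-up), the rook is placed
in the largest column `≤ λ_i` not used by a lower row. -/
def IsGreedy {n : ℕ} {lam : Partition n} (t : Placement lam) : Prop :=
  ∀ i : Fin n, ∀ m : ℕ, 1 ≤ m → m ≤ lam.part i →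
    (∀ k : Fin n, k < i → t.col k ≠ m) → m ≤ t.col i

/-- `x` is obtained from `y` by the switch move on the rooks in rows `i < k`:
the rectangle spanned by the rooks at `(i, y.col i)` and `(k, y.col k)` contains no other rook,
and the two rooks exchange columns. -/
def SwitchMove {n : ℕ} {lam : Partition n} (y x : Placement lam) (i k : Fin n) : Prop :=
  i < k ∧ y.col k < y.col i ∧
  (∀ r : Fin n, i ≤ r → r ≤ k → y.col k ≤ y.col r → y.col r ≤ y.col i → r = i ∨ r = k) ∧
  x.col i = y.col k ∧ x.col k = y.col i ∧
  ∀ r : Fin n, r ≠ i → r ≠ k → x.col r = y.col r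

/-- `x` is obtained from `y` by a push move on the rook in row `i`: the rook moves to an
empty column `c` to its left such that every column strictly between `c` and its old column
contains a rook in a row below row `i`. -/
def PushMove {n : ℕ} {lam : Partition n} (y x : Placement lam) (i : Fin n) : Prop :=
  ∃ c : ℕ, 1 ≤ c ∧ c < y.col i ∧ (∀ r : Fin n, y.col r ≠ c) ∧
    (∀ d : ℕ, c < d → d < y.col i → ∃ r : Fin n, r < i ∧ y.col r = d) ∧
    x.col i = c ∧ ∀ r : Fin n, r ≠ i → x.col r = y.col r

/-- `x` is obtained from `y` by a single switch or push move on the rook in row `i`. -/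
def MoveOnRow {n : ℕ} {lam : Partition n} (y x : Placement lam) (i : Fin n) : Prop :=
  (∃ k : Fin n, SwitchMove y x i k) ∨ PushMove y x i

/-- Two coatoms `c, c'` of the rook poset (with top element `t`) are entangled:
there are two distinct elements each of which is covered by both `c` and `c'`
and lies below no other coatom. -/
def Entangled {n : ℕ} {lam : Partition n} (t c c' : Placement lam) : Prop :=
  ∃ z₁ z₂ : Placement lam, z₁ ≠ z₂ ∧
    (rcovers z₁ c ∧ rcovers z₁ c' ∧
      ∀ d : Placement lam, rcovers d t → d ≠ c → d ≠ c' → ¬ rle z₁ d) ∧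
    (rcovers z₂ c ∧ rcovers z₂ c' ∧
      ∀ d : Placement lam, rcovers d t → d ≠ c → d ≠ c' → ¬ rle z₂ d)

/-- `X_I`: the set of elements of the rook poset lying below no coatom outside `I`. -/
def Xset {n : ℕ} {lam : Partition n} (t : Placement lam) (I : Set (Placement lam)) :
    Set (Placement lam) :=
  {z : Placement lam | ∀ c' : Placement lam, rcovers c' t → c' ∉ I → ¬ rle z c'}

/-- The completed permutation `σ_x` of `{1, …, λ_n}` (as a function on 1-based positions):
position `i ≤ n` holds `x_i`, and the remaining positions hold the unused values in
increasing order (i.e. each subsequent position receives the smallest value not yet used). -/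
def Placement.sigma {n : ℕ} {lam : Partition n} (x : Placement lam) : ℕ → ℕ := fun a =>
  if h : 1 ≤ a ∧ a ≤ n then x.col ⟨a - 1, by omega⟩
  else ((Finset.Icc 1 lam.maxPart \ Finset.univ.image x.col).sort (· ≤ ·)).getD (a - n - 1) 0

/-- The rank `r(x)`: the number of inversions of the completed permutation `σ_x`. -/
def Placement.rank {n : ℕ} {lam : Partition n} (x : Placement lam) : ℕ :=
  ((Finset.Icc 1 lam.maxPart ×ˢ Finset.Icc 1 lam.maxPart).filter
    fun p => p.1 < p.2 ∧ x.sigma p.2 < x.sigma p.1).card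

/-- Break a list after every entry equal to `1`. -/
def breakAfterOnes : List ℕ → List (List ℕ)
  | [] => []
  | a :: rest =>
    if a = 1 then [a] :: breakAfterOnes rest
    else
      match breakAfterOnes rest with
      | [] => [[a]]
      | b :: bs => (a :: b) :: bs

/-- The multiset of blocks of a partition: break the GJW sequence after every entry
equal to `1` and delete all entries equal to `0` (discarding empty blocks). -/
def Partition.blocks {n : ℕ} (lam : Partition n) : Multiset (List ℕ) :=
  (((breakAfterOnes lam.gjw).map fun b => b.filter (· ≠ 0)).filter
    (· ≠ ([] : List ℕ)) : List (List ℕ))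

/-- The conjugate of a block `b = (g_1, …, g_k)` ending in `1`: it is the GJW sequence of the
conjugate partition `ν'` of the partition `ν` with `ν_i = g_i + i`, where
`ν'_i = k + 2 - min {m | ν_m ≥ k + 2 - i}` with the convention `ν_{k+1} = k + 1`. -/
noncomputable def conjBlock (b : List ℕ) : List ℕ :=
  let k := b.length
  let nu : ℕ → ℕ := fun m => if m ≤ k then b.getD (m - 1) 0 + m else k + 1
  (List.range k).map fun i0 =>
    let i := i0 + 1
    (k + 2 - sInf {m : ℕ | 1 ≤ m ∧ k + 2 - i ≤ nu m}) - i

/-- A block ends in `1`. -/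
def endsInOne (b : List ℕ) : Prop := b.getLast? = some 1

/-- Two blocks are equivalent when they are equal, or one ends in `1` and the other is its
conjugate block. -/
def BlockEquiv (b b' : List ℕ) : Prop :=
  b = b' ∨ (endsInOne b ∧ b' = conjBlock b) ∨ (endsInOne b' ∧ b = conjBlock b')

/-- Two partitions have matching block data: their multisets of blocks become equal after
replacing some blocks ending in `1` by their conjugate blocks. -/
def MatchingBlocks {n m : ℕ} (lam : Partition n) (mu : Partition m) : Prop :=
  Multiset.Rel BlockEquiv lam.blocks mu.blocks

/-- The rook posets of `lam` and `mu` are isomorphic as partially ordered sets. -/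
def RookIso {n m : ℕ} (lam : Partition n) (mu : Partition m) : Prop :=
  ∃ e : Placement lam ≃ Placement mu, ∀ a b : Placement lam, rle a b ↔ rle (e a) (e b)

/-- A function `τ`, viewed as a permutation of `{1, …, N}`, is `312`-avoiding. -/
def Avoids312 (N : ℕ) (τ : ℕ → ℕ) : Prop :=
  ∀ a b c : ℕ, 1 ≤ a → a < b → b < c → c ≤ N → ¬ (τ b < τ c ∧ τ c < τ a)

/-- A permutation of `Fin N` is `312`-avoiding. -/
def Avoids312P {N : ℕ} (τ : Equiv.Perm (Fin N)) : Prop :=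
  ∀ a b c : Fin N, a < b → b < c → ¬ (τ b < τ c ∧ τ c < τ a)

/-- The Bruhat order on permutations, characterized by componentwise dominance of the
increasingly sorted initial segments. -/
def bruhatLE {N : ℕ} (σ τ : Equiv.Perm (Fin N)) : Prop :=
  ∀ j : ℕ, List.Forall₂ (· ≤ ·)
    (initSeg (fun a : Fin N => (σ a : ℕ)) j) (initSeg (fun a : Fin N => (τ a : ℕ)) j)



/-- sorted dominance iff counting -/
lemma sorted_forall2_iff : ∀ (L L' : List ℕ), L.Pairwise (· ≤ ·) → L'.Pairwise (· ≤ ·) →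
    L.length = L'.length →
    (List.Forall₂ (· ≤ ·) L L' ↔ ∀ w, L'.countP (· ≤ w) ≤ L.countP (· ≤ w)) := by
  intro L
  induction L with
  | nil =>
    intro L' _ _ hlen
    cases L' with
    | nil => simp
    | cons b l' => simp at hlen
  | cons a l ih =>
    intro L' hL hL' hlen
    cases L' with
    | nil => simp at hlen
    | cons b l' =>
      simp only [List.length_cons, Nat.succ_inj] at hlen
      have hl : l.Pairwise (· ≤ ·) := hL.of_cons
      have hl' : l'.Pairwise (· ≤ ·) := hL'.of_cons
      constructor
      · rintro hf w
        rcases List.forall₂_cons.mp hf with ⟨hab, hf'⟩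
        have := (ih l' hl hl' hlen).mp hf' w
        simp only [List.countP_cons]
        by_cases hbw : b ≤ w
        · have haw : a ≤ w := le_trans hab hbw
          simp [hbw, haw, decide_eq_true_eq]
          omega
        · simp [hbw, decide_eq_true_eq]
          split <;> omega
      · intro hcnt
        have hab : a ≤ b := by
          by_contra hba
          push_neg at hba
          have h1 : (b :: l').countP (· ≤ b) ≥ 1 := by
            simp [List.countP_cons]
          have h2 : (a :: l).countP (· ≤ b) = 0 := by
            rw [List.countP_eq_zero]
            intro e he
            simp only [decide_eq_true_eq]
            rcases List.mem_cons.mp he with rfl | he'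
            · omega
            · have := (List.pairwise_cons.mp hL).1 e he'
              omega
          have := hcnt b
          omega
        refine List.forall₂_cons.mpr ⟨hab, (ih l' hl hl' hlen).mpr ?_⟩
        intro w
        by_cases hbw : b ≤ w
        · have haw : a ≤ w := le_trans hab hbw
          have := hcnt w
          simp [List.countP_cons, hbw, haw] at this
          omega
        · have h0 : l'.countP (· ≤ w) = 0 := by
            rw [List.countP_eq_zero]
            intro e he
            simp only [decide_eq_true_eq]
            have := (List.pairwise_cons.mp hL').1 e he
            omega
          omega


def cnt {n : ℕ} (x : Fin n → ℕ) (j w : ℕ) : ℕ :=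
  (Finset.univ.filter fun i : Fin n => (i : ℕ) < j ∧ x i ≤ w).card

lemma countP_sort (s : Finset ℕ) (w : ℕ) :
    (s.sort (· ≤ ·)).countP (· ≤ w) = (s.filter (· ≤ w)).card := by
  have hperm := Finset.sort_perm_toList s (· ≤ ·)
  rw [hperm.countP_eq]
  have h1 : (s.filter (· ≤ w)).card = Multiset.countP (fun e => e ≤ w) s.val := by
    rw [Multiset.countP_eq_card_filter]; rfl
  rw [h1, ← Finset.coe_toList s, Multiset.coe_countP]

lemma countP_initSeg {n : ℕ} (x : Fin n → ℕ) (hx : Function.Injective x) (j w : ℕ) :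
    (initSeg x j).countP (· ≤ w) = cnt x j w := by
  rw [initSeg, countP_sort]
  rw [cnt]
  rw [Finset.filter_image]
  rw [Finset.card_image_of_injective _ hx]
  congr 1
  ext i
  simp

lemma length_initSeg {n : ℕ} (x : Fin n → ℕ) (hx : Function.Injective x) (j : ℕ) :
    (initSeg x j).length = (Finset.univ.filter fun i : Fin n => (i : ℕ) < j).card := by
  rw [initSeg, Finset.length_sort, Finset.card_image_of_injective _ hx]

lemma sorted_initSeg {n : ℕ} (x : Fin n → ℕ) (j : ℕ) : (initSeg x j).Pairwise (· ≤ ·) :=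
  Finset.pairwise_sort _ _


lemma rle_iff_cnt {n : ℕ} {lam : Partition n} (x y : Placement lam) :
    rle x y ↔ ∀ j w, cnt y.col j w ≤ cnt x.col j w := by
  have hlen : ∀ j, (initSeg x.col j).length = (initSeg y.col j).length := fun j => by
    rw [length_initSeg _ x.inj, length_initSeg _ y.inj]
  constructor
  · intro h j w
    have := (sorted_forall2_iff _ _ (sorted_initSeg _ _) (sorted_initSeg _ _)
      (hlen j)).mp (h j) w
    rwa [countP_initSeg _ x.inj, countP_initSeg _ y.inj] at this
  · intro h j
    refine (sorted_forall2_iff _ _ (sorted_initSeg _ _) (sorted_initSeg _ _) (hlen j)).mpr ?_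
    intro w
    rw [countP_initSeg _ x.inj, countP_initSeg _ y.inj]
    exact h j w


/-! ### auxiliary defs -/

def invc {n : ℕ} (f : Fin n → ℕ) : ℕ :=
  (Finset.univ.filter fun p : Fin n × Fin n => p.1 < p.2 ∧ f p.2 < f p.1).card

def rho {n : ℕ} (f : Fin n → ℕ) : ℕ := (∑ i, f i) + invc f

variable {n : ℕ} {lam : Partition n}

lemma col_le_max (x : Placement lam) (i : Fin n) : x.col i ≤ lam.maxPart :=
  le_trans (x.le_part i) (Finset.le_sup (Finset.mem_univ i))

lemma n_le_max (x : Placement lam) : n ≤ lam.maxPart := by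
  rcases Nat.eq_zero_or_pos n with h | h
  · omega
  · have h1 := lam.staircase ⟨n - 1, by omega⟩
    have h2 : lam.part ⟨n - 1, by omega⟩ ≤ lam.maxPart := Finset.le_sup (Finset.mem_univ _)
    simp only at h1
    omega

def compl (x : Placement lam) : Finset ℕ :=
  Finset.Icc 1 lam.maxPart \ Finset.univ.image x.col

def clist (x : Placement lam) : List ℕ := (compl x).sort (· ≤ ·)

lemma img_subset (x : Placement lam) :
    Finset.univ.image x.col ⊆ Finset.Icc 1 lam.maxPart := by
  intro e he
  rcases Finset.mem_image.mp he with ⟨i, _, rfl⟩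
  exact Finset.mem_Icc.mpr ⟨x.pos i, col_le_max x i⟩

lemma card_img (x : Placement lam) : (Finset.univ.image x.col).card = n := by
  rw [Finset.card_image_of_injective _ x.inj, Finset.card_univ, Fintype.card_fin]

lemma card_compl (x : Placement lam) : (compl x).card = lam.maxPart - n := by
  rw [compl, Finset.card_sdiff_of_subset (img_subset x), Nat.card_Icc, card_img]
  omega

lemma clist_length (x : Placement lam) : (clist x).length = lam.maxPart - n := by
  rw [clist, Finset.length_sort, card_compl]

lemma sigma_low (x : Placement lam) (a : ℕ) (h1 : 1 ≤ a) (h2 : a ≤ n) :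
    x.sigma a = x.col ⟨a - 1, by omega⟩ := by
  rw [Placement.sigma, dif_pos ⟨h1, h2⟩]

lemma sigma_low' (x : Placement lam) (i : Fin n) : x.sigma ((i : ℕ) + 1) = x.col i := by
  rw [sigma_low x _ (by omega) (by omega)]
  congr 1

lemma sigma_high (x : Placement lam) (a : ℕ) (h1 : n < a) :
    x.sigma a = (clist x).getD (a - n - 1) 0 := by
  rw [Placement.sigma, dif_neg (by omega)]
  rfl

lemma sigma_tail_mem (x : Placement lam) (a : ℕ) (h1 : n < a) (h2 : a ≤ lam.maxPart) :
    x.sigma a ∈ compl x := by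
  have hlt : a - n - 1 < (clist x).length := by rw [clist_length]; omega
  rw [sigma_high x a h1, List.getD_eq_getElem _ _ hlt]
  have := List.getElem_mem hlt
  rwa [← Finset.mem_sort (α := ℕ) (· ≤ ·)]

lemma sigma_tail_strictMono (x : Placement lam) (a b : ℕ) (h1 : n < a) (h2 : a < b)
    (h3 : b ≤ lam.maxPart) : x.sigma a < x.sigma b := by
  have hlt1 : a - n - 1 < (clist x).length := by rw [clist_length]; omega
  have hlt2 : b - n - 1 < (clist x).length := by rw [clist_length]; omega
  rw [sigma_high x a h1, sigma_high x b (by omega), List.getD_eq_getElem _ _ hlt1,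
    List.getD_eq_getElem _ _ hlt2]
  have hs : List.Pairwise (· < ·) (clist x) := (Finset.sortedLT_sort _).pairwise
  have := hs.rel_get_of_lt (a := ⟨a - n - 1, hlt1⟩) (b := ⟨b - n - 1, hlt2⟩)
    (by simp [Fin.lt_def]; omega)
  simpa using this

lemma sigma_tail_surj (x : Placement lam) (e : ℕ) (he : e ∈ compl x) :
    ∃ a, n < a ∧ a ≤ lam.maxPart ∧ x.sigma a = e := by
  have hmem : e ∈ clist x := by rwa [clist, Finset.mem_sort]
  rcases List.mem_iff_get.mp hmem with ⟨⟨t, ht⟩, hget⟩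
  have htl : t < lam.maxPart - n := by rwa [clist_length] at ht
  refine ⟨n + 1 + t, by omega, by omega, ?_⟩
  rw [sigma_high x _ (by omega)]
  have : n + 1 + t - n - 1 = t := by omega
  rw [this, List.getD_eq_getElem _ _ ht]
  exact hget


variable {n : ℕ} {lam : Partition n}

lemma card_S1 (x : Placement lam) :
    ((Finset.Icc 1 lam.maxPart ×ˢ Finset.Icc 1 lam.maxPart).filter
      fun p => (p.1 < p.2 ∧ x.sigma p.2 < x.sigma p.1) ∧ p.2 ≤ n).card = invc x.col := by
  rw [invc]
  symm
  refine Finset.card_bij (fun q _ => ((q.1 : ℕ) + 1, (q.2 : ℕ) + 1)) ?_ ?_ ?_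
  · intro q hq
    simp only [Finset.mem_filter, Finset.mem_univ, true_and] at hq
    obtain ⟨h12, hcol⟩ := hq
    have hM := n_le_max x
    have h1 : (q.1 : ℕ) < n := q.1.isLt
    have h2 : (q.2 : ℕ) < n := q.2.isLt
    simp only [Finset.mem_filter, Finset.mem_product, Finset.mem_Icc]
    refine ⟨⟨⟨by omega, by omega⟩, by omega, by omega⟩, ⟨?_, ?_⟩, by omega⟩
    · have h12' : (q.1 : ℕ) < (q.2 : ℕ) := h12
      omega
    · rw [sigma_low' x q.1, sigma_low' x q.2]
      exact hcol
  · intro q1 h1 q2 h2 heq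
    simp only [Prod.mk.injEq] at heq
    exact Prod.ext (Fin.ext (by omega)) (Fin.ext (by omega))
  · intro p hp
    simp only [Finset.mem_filter, Finset.mem_product, Finset.mem_Icc] at hp
    obtain ⟨⟨⟨ha1, _⟩, hb1, _⟩, ⟨hab, hs⟩, hbn⟩ := hp
    have han : p.1 ≤ n := by omega
    refine ⟨(⟨p.1 - 1, by omega⟩, ⟨p.2 - 1, by omega⟩), ?_, ?_⟩
    · simp only [Finset.mem_filter, Finset.mem_univ, true_and]
      constructor
      · exact Fin.mk_lt_mk.mpr (by omega)
      · have e1 := sigma_low x p.1 ha1 han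
        have e2 := sigma_low x p.2 hb1 hbn
        rw [e1, e2] at hs
        exact hs
    · apply Prod.ext <;> simp <;> omega

lemma card_tail_lt (x : Placement lam) (v : ℕ) :
    ((Finset.Icc (n+1) lam.maxPart).filter fun b => x.sigma b < v).card
      = ((compl x).filter (· < v)).card := by
  refine Finset.card_bij (fun b _ => x.sigma b) ?_ ?_ ?_
  · intro b hb
    simp only [Finset.mem_filter, Finset.mem_Icc] at hb ⊢
    exact ⟨sigma_tail_mem x b (by omega) hb.1.2, hb.2⟩
  · intro b1 h1 b2 h2 heq
    simp only [Finset.mem_filter, Finset.mem_Icc] at h1 h2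
    by_contra hne
    rcases Nat.lt_or_ge b1 b2 with h | h
    · have := sigma_tail_strictMono x b1 b2 (by omega) h h2.1.2
      omega
    · have hlt : b2 < b1 := by omega
      have := sigma_tail_strictMono x b2 b1 (by omega) hlt h1.1.2
      omega
  · intro e he
    simp only [Finset.mem_filter] at he
    rcases sigma_tail_surj x e he.1 with ⟨a, ha1, ha2, ha3⟩
    exact ⟨a, by simp only [Finset.mem_filter, Finset.mem_Icc]; exact ⟨⟨by omega, ha2⟩,
      by rw [ha3]; exact he.2⟩, ha3⟩

lemma compl_count (x : Placement lam) (i : Fin n) :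
    ((compl x).filter (· < x.col i)).card
      + (Finset.univ.filter fun k : Fin n => x.col k < x.col i).card + 1 = x.col i := by
  set v := x.col i with hv
  have hv1 : 1 ≤ v := x.pos i
  have hvM : v ≤ lam.maxPart := col_le_max x i
  have hset : (compl x).filter (· < v)
      = Finset.Icc 1 (v-1) \ (Finset.univ.image x.col).filter (· < v) := by
    ext e
    by_cases he : e ∈ Finset.univ.image x.col <;>
      simp [compl, Finset.mem_Icc, he] <;> omega
  have hsub : (Finset.univ.image x.col).filter (· < v) ⊆ Finset.Icc 1 (v-1) := by
    intro e he
    simp only [Finset.mem_filter] at he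
    have := img_subset x he.1
    simp only [Finset.mem_Icc] at this ⊢
    omega
  have himg : ((Finset.univ.image x.col).filter (· < v)).card
      = (Finset.univ.filter fun k : Fin n => x.col k < v).card := by
    rw [Finset.filter_image, Finset.card_image_of_injective _ x.inj]
  have hle := Finset.card_le_card hsub
  rw [himg, Nat.card_Icc] at hle
  have hcard : ((compl x).filter (· < v)).card
      = (v - 1 + 1 - 1) - (Finset.univ.filter fun k : Fin n => x.col k < v).card := by
    rw [hset, Finset.card_sdiff_of_subset hsub, Nat.card_Icc, himg]
  rw [hcard]
  omega

lemma sum_ci (x : Placement lam) :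
    2 * (∑ i : Fin n, (Finset.univ.filter fun k : Fin n => x.col k < x.col i).card) + n
      = n * n := by
  classical
  set Tlt := (Finset.univ.filter fun q : Fin n × Fin n => x.col q.1 < x.col q.2) with hTlt
  set Tgt := (Finset.univ.filter fun q : Fin n × Fin n => x.col q.2 < x.col q.1) with hTgt
  have hfib : Tlt.card = ∑ i : Fin n, (Tlt.filter fun q => q.2 = i).card :=
    Finset.card_eq_sum_card_fiberwise (fun q _ => Finset.mem_univ q.2)
  have hper : ∀ i : Fin n, (Tlt.filter fun q => q.2 = i).card
      = (Finset.univ.filter fun k : Fin n => x.col k < x.col i).card := by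
    intro i
    refine Finset.card_bij (fun q _ => q.1) ?_ ?_ ?_
    · intro q hq
      simp only [hTlt, Finset.mem_filter, Finset.mem_univ, true_and] at hq ⊢
      rcases hq with ⟨h1, rfl⟩
      exact h1
    · intro q1 h1 q2 h2 heq
      simp only [hTlt, Finset.mem_filter] at h1 h2
      exact Prod.ext heq (h1.2.trans h2.2.symm)
    · intro k hk
      simp only [Finset.mem_filter, Finset.mem_univ, true_and] at hk
      exact ⟨(k, i), by simp [hTlt, hk], rfl⟩
  have hsum : Tlt.card = ∑ i : Fin n, (Finset.univ.filter fun k : Fin n => x.col k < x.col i).card := by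
    rw [hfib]; exact Finset.sum_congr rfl fun i _ => hper i
  have hswap : Tgt.card = Tlt.card := by
    refine Finset.card_bij (fun q _ => q.swap) ?_ ?_ ?_
    · intro q hq
      simp only [hTlt, hTgt, Finset.mem_filter, Finset.mem_univ, true_and] at hq ⊢
      exact hq
    · intro q1 h1 q2 h2 heq
      exact Prod.swap_injective heq
    · intro q hq
      simp only [hTlt, Finset.mem_filter, Finset.mem_univ, true_and] at hq
      exact ⟨q.swap, by simp [hTgt, hq], by simp⟩
  have hsplit1 := Finset.card_filter_add_card_filter_not
    (s := (Finset.univ : Finset (Fin n × Fin n)))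
    (p := fun q => x.col q.1 < x.col q.2)
  have hsplit2 := Finset.card_filter_add_card_filter_not
    (s := (Finset.univ.filter fun q : Fin n × Fin n => ¬ x.col q.1 < x.col q.2))
    (p := fun q => x.col q.2 < x.col q.1)
  have he1 : ((Finset.univ.filter fun q : Fin n × Fin n => ¬ x.col q.1 < x.col q.2).filter
      fun q => x.col q.2 < x.col q.1) = Tgt := by
    rw [Finset.filter_filter]
    apply Finset.filter_congr
    intro q _
    constructor
    · exact fun h => h.2
    · exact fun h => ⟨by omega, h⟩
  have he2 : ((Finset.univ.filter fun q : Fin n × Fin n => ¬ x.col q.1 < x.col q.2).filter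
      fun q => ¬ x.col q.2 < x.col q.1) = Finset.univ.filter fun q : Fin n × Fin n => q.1 = q.2 := by
    rw [Finset.filter_filter]
    apply Finset.filter_congr
    intro q _
    simp only [not_lt]
    constructor
    · intro ⟨h1, h2⟩
      exact x.inj (le_antisymm h2 h1)
    · intro h
      rw [h]
      exact ⟨le_refl _, le_refl _⟩
  have hdiag : (Finset.univ.filter fun q : Fin n × Fin n => q.1 = q.2).card = n := by
    rw [show (Finset.univ.filter fun q : Fin n × Fin n => q.1 = q.2)
        = Finset.univ.image (fun i : Fin n => (i, i)) by
      ext q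
      simp only [Finset.mem_filter, Finset.mem_univ, true_and, Finset.mem_image]
      constructor
      · intro h
        exact ⟨q.1, Prod.ext rfl h⟩
      · rintro ⟨i, _, rfl⟩; rfl]
    rw [Finset.card_image_of_injective, Finset.card_univ, Fintype.card_fin]
    intro a b hab
    exact (Prod.ext_iff.mp hab).1
  have huniv : (Finset.univ : Finset (Fin n × Fin n)).card = n * n := by
    simp [Finset.card_univ]
  have e1 : Tlt.card
      + (Finset.univ.filter fun q : Fin n × Fin n => ¬ x.col q.1 < x.col q.2).card
      = n * n := by rw [← huniv]; exact hsplit1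
  have e2 : Tgt.card + (Finset.univ.filter fun q : Fin n × Fin n => q.1 = q.2).card
      = (Finset.univ.filter fun q : Fin n × Fin n => ¬ x.col q.1 < x.col q.2).card := by
    rw [← he1, ← he2]
    exact hsplit2
  rw [← hsum, ← hswap]
  omega


variable {n : ℕ} {lam : Partition n}

lemma rank_formula (x : Placement lam) : 2 * x.rank + n * n + n = 2 * rho x.col := by
  classical
  have hM := n_le_max x
  have h0 : x.rank = ((Finset.Icc 1 lam.maxPart ×ˢ Finset.Icc 1 lam.maxPart).filter
      fun p => p.1 < p.2 ∧ x.sigma p.2 < x.sigma p.1).card := rfl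
  set F := ((Finset.Icc 1 lam.maxPart ×ˢ Finset.Icc 1 lam.maxPart).filter
      fun p => p.1 < p.2 ∧ x.sigma p.2 < x.sigma p.1) with hF
  have hsplit := Finset.card_filter_add_card_filter_not
    (s := F) (p := fun p => p.2 ≤ n)
  have hA : (F.filter fun p => p.2 ≤ n).card = invc x.col := by
    rw [hF, Finset.filter_filter]
    exact card_S1 x
  -- second piece
  set S2 := F.filter (fun p => ¬ p.2 ≤ n) with hS2
  have hmem : ∀ p ∈ S2, p.1 ∈ Finset.Icc 1 n := by
    intro p hp
    simp only [hS2, hF, Finset.mem_filter, Finset.mem_product, Finset.mem_Icc] at hp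
    obtain ⟨⟨⟨⟨ha1, haM⟩, hb1, hbM⟩, hab, hs⟩, hbn⟩ := hp
    simp only [Finset.mem_Icc]
    refine ⟨ha1, ?_⟩
    by_contra han
    push_neg at han
    have := sigma_tail_strictMono x p.1 p.2 (by omega) hab hbM
    omega
  have hfib : S2.card = ∑ a ∈ Finset.Icc 1 n, (S2.filter fun p => p.1 = a).card :=
    Finset.card_eq_sum_card_fiberwise hmem
  have hper : ∀ a ∈ Finset.Icc 1 n, (S2.filter fun p => p.1 = a).card
      = ((compl x).filter (· < x.sigma a)).card := by
    intro a ha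
    simp only [Finset.mem_Icc] at ha
    rw [← card_tail_lt]
    refine Finset.card_bij (fun p _ => p.2) ?_ ?_ ?_
    · intro p hp
      simp only [hS2, hF, Finset.mem_filter, Finset.mem_product, Finset.mem_Icc, not_le]
        at hp ⊢
      obtain ⟨⟨⟨⟨⟨_, _⟩, _, hbM⟩, _, hs⟩, hbn⟩, hpa⟩ := hp
      subst hpa
      exact ⟨⟨by omega, hbM⟩, hs⟩
    · intro p1 h1 p2 h2 heq
      simp only [hS2, Finset.mem_filter] at h1 h2
      exact Prod.ext (h1.2.trans h2.2.symm) heq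
    · intro b hb
      simp only [Finset.mem_filter, Finset.mem_Icc] at hb
      obtain ⟨⟨hb1, hbM⟩, hbs⟩ := hb
      refine ⟨(a, b), ?_, rfl⟩
      simp only [hS2, hF, Finset.mem_filter, Finset.mem_product, Finset.mem_Icc, not_le]
      exact ⟨⟨⟨⟨⟨by omega, by omega⟩, ⟨by omega, hbM⟩⟩, ⟨by omega, hbs⟩⟩, by omega⟩, trivial⟩
  have hB : S2.card = ∑ i : Fin n, ((compl x).filter (· < x.col i)).card := by
    rw [hfib, Finset.sum_congr rfl hper]
    refine Finset.sum_bij (fun a ha => (⟨a - 1, by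
      have := Finset.mem_Icc.mp ha; omega⟩ : Fin n)) ?_ ?_ ?_ ?_
    · intro a _; exact Finset.mem_univ _
    · intro a1 h1 a2 h2 heq
      simp only [Fin.mk.injEq] at heq
      simp only [Finset.mem_Icc] at h1 h2
      omega
    · intro i _
      exact ⟨(i : ℕ) + 1, Finset.mem_Icc.mpr ⟨by omega, by omega⟩, Fin.ext (by simp)⟩
    · intro a ha
      simp only [Finset.mem_Icc] at ha
      rw [sigma_low x a ha.1 ha.2]
  have hcc : (∑ i : Fin n, ((compl x).filter (· < x.col i)).card)
      + (∑ i : Fin n, (Finset.univ.filter fun k : Fin n => x.col k < x.col i).card)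
      + n = ∑ i : Fin n, x.col i := by
    have hpt : ∀ i : Fin n, ((compl x).filter (· < x.col i)).card
        + (Finset.univ.filter fun k : Fin n => x.col k < x.col i).card + 1 = x.col i :=
      compl_count x
    have hsum1 : ∑ i : Fin n, (((compl x).filter (· < x.col i)).card
        + (Finset.univ.filter fun k : Fin n => x.col k < x.col i).card + 1)
        = ∑ i : Fin n, x.col i := Finset.sum_congr rfl fun i _ => hpt i
    rw [Finset.sum_add_distrib, Finset.sum_add_distrib, Finset.sum_const, Finset.card_univ,
      Fintype.card_fin, smul_eq_mul, mul_one] at hsum1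
    omega
  have hci := sum_ci x
  rw [rho]
  omega


variable {n : ℕ} {lam : Partition n}

lemma sum_split_two {a b : Fin n} (hab : a ≠ b) (t : Fin n → ℕ) :
    ∑ i, t i = t a + t b + ∑ i ∈ (Finset.univ.erase a).erase b, t i := by
  rw [← Finset.add_sum_erase _ t (Finset.mem_univ a),
    ← Finset.add_sum_erase _ t (Finset.mem_erase.mpr ⟨Ne.symm hab, Finset.mem_univ b⟩),
    add_assoc]

lemma mem_erase2 {a b i : Fin n} (hi : i ∈ (Finset.univ.erase a).erase b) : i ≠ a ∧ i ≠ b := by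
  rw [Finset.mem_erase, Finset.mem_erase] at hi
  exact ⟨hi.2.1, hi.1⟩

def epair {n : ℕ} (f : Fin n → ℕ) (i k : Fin n) : ℕ := if i < k ∧ f k < f i then 1 else 0

def erow {n : ℕ} (f : Fin n → ℕ) (i : Fin n) : ℕ := ∑ k, epair f i k

lemma invc_eq (f : Fin n → ℕ) : invc f = ∑ i : Fin n, erow f i := by
  rw [invc, Finset.card_filter, ← Finset.univ_product_univ, Finset.sum_product]
  rfl

lemma rho_swap (f g : Fin n → ℕ) (hf : Function.Injective f) (a b : Fin n) (hab : a < b)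
    (h1 : g a = f b) (h2 : g b = f a) (h3 : ∀ i, i ≠ a → i ≠ b → g i = f i)
    (hlt : f b < f a)
    (hrect : ∀ i, a < i → i < b → ¬(f b ≤ f i ∧ f i < f a)) :
    rho f = rho g + 1 := by
  have habne : a ≠ b := hab.ne
  -- sums of values are equal
  have hsum : ∑ i, f i = ∑ i, g i := by
    rw [sum_split_two habne f, sum_split_two habne g, h1, h2]
    have ht : ∑ i ∈ (Finset.univ.erase a).erase b, f i
        = ∑ i ∈ (Finset.univ.erase a).erase b, g i :=
      Finset.sum_congr rfl fun i hi => ((h3 i (mem_erase2 hi).1 (mem_erase2 hi).2).symm)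
    omega
  -- inversion counts
  have hrowE : ∀ i, i ≠ a → i ≠ b → erow g i = erow f i := by
    intro i hia hib
    rw [erow, erow, sum_split_two habne (epair g i), sum_split_two habne (epair f i)]
    have htail : ∑ k ∈ (Finset.univ.erase a).erase b, epair g i k
        = ∑ k ∈ (Finset.univ.erase a).erase b, epair f i k := by
      refine Finset.sum_congr rfl fun k hk => ?_
      obtain ⟨hka, hkb⟩ := mem_erase2 hk
      simp only [epair, h3 i hia hib, h3 k hka hkb]
    have hgi : g i = f i := h3 i hia hib
    have hhead : epair g i a + epair g i b = epair f i a + epair f i b := by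
      simp only [epair, h1, h2, hgi]
      by_cases hia' : i < a
      · have hib' : i < b := hia'.trans hab
        simp only [hia', hib', true_and]
        split_ifs <;> omega
      · by_cases hib' : i < b
        · have hai : a < i := lt_of_le_of_ne (not_lt.mp hia') (Ne.symm hia)
          have hne1 : f i ≠ f a := fun h => (hai.ne' (hf h))
          have hkey : ¬(f b ≤ f i ∧ f i < f a) := hrect i hai hib'
          simp only [hia', hib', false_and, if_false, true_and, zero_add]
          split_ifs <;> omega
        · simp [hia', hib']
    omega
  have hcross : erow g a + erow g b + 1 = erow f a + erow f b := by
    rw [erow, erow, erow, erow, sum_split_two habne (epair g a),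
      sum_split_two habne (epair g b), sum_split_two habne (epair f a),
      sum_split_two habne (epair f b)]
    have hd1 : epair f a a = 0 := by simp [epair]
    have hd2 : epair g a a = 0 := by simp [epair]
    have hd3 : epair f b b = 0 := by simp [epair]
    have hd4 : epair g b b = 0 := by simp [epair]
    have hd5 : epair f b a = 0 := by simp [epair, hab.not_gt]
    have hd6 : epair g b a = 0 := by simp [epair, hab.not_gt]
    have hd7 : epair f a b = 1 := by simp [epair, hab, hlt]
    have hd8 : epair g a b = 0 := by
      simp only [epair, h1, h2]
      simp [hab, not_lt_of_gt hlt]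
    have htails : (∑ k ∈ (Finset.univ.erase a).erase b, epair g a k)
        + (∑ k ∈ (Finset.univ.erase a).erase b, epair g b k)
        = (∑ k ∈ (Finset.univ.erase a).erase b, epair f a k)
        + (∑ k ∈ (Finset.univ.erase a).erase b, epair f b k) := by
      rw [← Finset.sum_add_distrib, ← Finset.sum_add_distrib]
      refine Finset.sum_congr rfl fun k hk => ?_
      obtain ⟨hka, hkb⟩ := mem_erase2 hk
      have hgk : g k = f k := h3 k hka hkb
      simp only [epair, h1, h2, hgk]
      by_cases hbk : b < k
      · have hak : a < k := hab.trans hbk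
        simp only [hbk, hak, true_and]
        split_ifs <;> omega
      · by_cases hak : a < k
        · have hkb' : k < b := lt_of_le_of_ne (not_lt.mp hbk) hkb
          have hkey : ¬(f b ≤ f k ∧ f k < f a) := hrect k hak hkb'
          have hne1 : f k ≠ f a := fun h => hak.ne' (hf h)
          have hne2 : f k ≠ f b := fun h => hkb'.ne (hf h)
          simp only [hak, hbk, false_and, if_false, true_and, add_zero]
          split_ifs <;> omega
        · simp [epair, hak, hbk]
    omega
  have hinv : invc f = invc g + 1 := by
    rw [invc_eq, invc_eq, sum_split_two habne (erow f), sum_split_two habne (erow g)]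
    have htaileq : ∑ i ∈ (Finset.univ.erase a).erase b, erow g i
        = ∑ i ∈ (Finset.univ.erase a).erase b, erow f i :=
      Finset.sum_congr rfl fun i hi => hrowE i (mem_erase2 hi).1 (mem_erase2 hi).2
    omega
  rw [rho, rho]
  omega

lemma rho_push (f g : Fin n → ℕ) (hf : Function.Injective f) (a : Fin n) (c : ℕ)
    (h1 : g a = c) (h3 : ∀ i, i ≠ a → g i = f i)
    (hlt : c < f a)
    (hempty : ∀ i, f i ≠ c)
    (hfill : ∀ d, c < d → d < f a → ∃ i, i < a ∧ f i = d) :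
    rho f = rho g + 1 := by
  have hKcard : (Finset.univ.filter fun i : Fin n => i < a ∧ c < f i ∧ f i < f a).card
      = f a - c - 1 := by
    rw [← Nat.card_Ioo c (f a)]
    refine Finset.card_bij (fun i _ => f i) ?_ ?_ ?_
    · intro i hi
      rw [Finset.mem_filter] at hi
      exact Finset.mem_Ioo.mpr ⟨hi.2.2.1, hi.2.2.2⟩
    · intro i1 hi1 i2 hi2 heq
      exact hf heq
    · intro d hd
      rw [Finset.mem_Ioo] at hd
      obtain ⟨i, hia, hfi⟩ := hfill d hd.1 hd.2
      refine ⟨i, ?_, hfi⟩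
      rw [Finset.mem_filter]
      exact ⟨Finset.mem_univ i, hia, by omega⟩
  have hsum : ∑ i, f i + c = (∑ i, g i) + f a := by
    rw [← Finset.add_sum_erase _ f (Finset.mem_univ a),
      ← Finset.add_sum_erase _ g (Finset.mem_univ a), h1]
    have ht : ∑ i ∈ Finset.univ.erase a, f i = ∑ i ∈ Finset.univ.erase a, g i :=
      Finset.sum_congr rfl fun i hi => (h3 i (Finset.mem_erase.mp hi).1).symm
    omega
  have hrowa : erow g a = erow f a := by
    rw [erow, erow]
    refine Finset.sum_congr rfl fun k _ => ?_
    by_cases hak : a < k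
    · have hka : k ≠ a := fun h => hak.ne' h
      have hgk : g k = f k := h3 k hka
      simp only [epair, h1, hgk, hak, true_and]
      have hiff : f k < f a → f k < c := by
        intro hkfa
        by_contra hkc
        obtain ⟨r, hra, hfr⟩ := hfill (f k) (by have := hempty k; omega) hkfa
        have hrk : r = k := hf hfr
        subst hrk
        exact absurd (hra.trans hak) (lt_irrefl _)
      by_cases hB : f k < f a
      · simp [hiff hB, hB]
      · have hA : ¬ f k < c := by omega
        simp [hA, hB]
    · simp [epair, hak]
  have hrowE : ∀ i, i ≠ a → erow g i = erow f i
      + (if i < a ∧ c < f i ∧ f i < f a then 1 else 0) := by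
    intro i hia
    rw [erow, erow, ← Finset.add_sum_erase _ (epair g i) (Finset.mem_univ a),
      ← Finset.add_sum_erase _ (epair f i) (Finset.mem_univ a)]
    have htail : ∑ k ∈ Finset.univ.erase a, epair g i k
        = ∑ k ∈ Finset.univ.erase a, epair f i k := by
      refine Finset.sum_congr rfl fun k hk => ?_
      simp only [epair, h3 i hia, h3 k (Finset.mem_erase.mp hk).1]
    have hgi : g i = f i := h3 i hia
    have hhead : epair g i a = epair f i a + (if i < a ∧ c < f i ∧ f i < f a then 1 else 0) := by
      simp only [epair, h1, hgi]
      by_cases hia' : i < a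
      · have hne1 : f i ≠ f a := fun h => hia'.ne (hf h)
        have hne2 : f i ≠ c := hempty i
        simp only [hia', true_and]
        split_ifs <;> omega
      · simp [hia']
    omega
  have hinv : invc g = invc f
      + (Finset.univ.filter fun i : Fin n => i < a ∧ c < f i ∧ f i < f a).card := by
    rw [invc_eq, invc_eq, ← Finset.add_sum_erase _ (erow g) (Finset.mem_univ a),
      ← Finset.add_sum_erase _ (erow f) (Finset.mem_univ a), hrowa]
    have htail : ∑ i ∈ Finset.univ.erase a, erow g i
        = ∑ i ∈ Finset.univ.erase a, (erow f i
          + (if i < a ∧ c < f i ∧ f i < f a then 1 else 0)) :=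
      Finset.sum_congr rfl fun i hi => hrowE i (Finset.mem_erase.mp hi).1
    rw [htail, Finset.sum_add_distrib]
    have hcard : ∑ i ∈ Finset.univ.erase a, (if i < a ∧ c < f i ∧ f i < f a then 1 else 0)
        = (Finset.univ.filter fun i : Fin n => i < a ∧ c < f i ∧ f i < f a).card := by
      rw [Finset.card_filter]
      rw [← Finset.add_sum_erase _ (fun i => if i < a ∧ c < f i ∧ f i < f a then 1 else 0)
        (Finset.mem_univ a)]
      simp
    omega
  rw [rho, rho]
  omega


variable {n : ℕ} {lam : Partition n}

lemma cnt_decomp (f : Fin n → ℕ) (a : Fin n) (j w : ℕ) (hj : (a : ℕ) < j) :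
    cnt f j w = (Finset.univ.filter fun i : Fin n => (i : ℕ) < (a : ℕ) ∧ f i ≤ w).card
      + (if f a ≤ w then 1 else 0)
      + (Finset.univ.filter fun i : Fin n => (a : ℕ) < (i : ℕ) ∧ (i : ℕ) < j ∧ f i ≤ w).card := by
  rw [cnt, Finset.card_filter, Finset.card_filter, Finset.card_filter]
  have hpt : ∀ i : Fin n, (if (i : ℕ) < j ∧ f i ≤ w then 1 else 0)
      = (if (i : ℕ) < (a : ℕ) ∧ f i ≤ w then 1 else 0)
      + (if i = a then (if f i ≤ w then 1 else 0) else 0)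
      + (if (a : ℕ) < (i : ℕ) ∧ (i : ℕ) < j ∧ f i ≤ w then 1 else 0) := by
    intro i
    rcases lt_trichotomy ((i : ℕ)) ((a : ℕ)) with h | h | h
    · have hne : i ≠ a := fun e => by rw [e] at h; omega
      simp only [hne, if_false]
      split_ifs <;> omega
    · have he : i = a := Fin.ext h
      subst he
      simp only [if_pos rfl]
      split_ifs <;> omega
    · have hne : i ≠ a := fun e => by rw [e] at h; omega
      simp only [hne, if_false]
      split_ifs <;> omega
  rw [Finset.sum_congr rfl fun i _ => hpt i, Finset.sum_add_distrib, Finset.sum_add_distrib,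
    Finset.sum_ite_eq' Finset.univ a (fun i => if f i ≤ w then 1 else 0)]
  simp

lemma cnt_strict (x y : Placement lam) (hcnt : ∀ j w, cnt y.col j w ≤ cnt x.col j w)
    (a : Fin n) (hpre : ∀ i : Fin n, (i : ℕ) < (a : ℕ) → x.col i = y.col i)
    (j w : ℕ) (hj : (a : ℕ) < j) (hw1 : x.col a ≤ w) (hw2 : w < y.col a)
    (hrows : ∀ i : Fin n, (a : ℕ) < (i : ℕ) → (i : ℕ) < j → y.col i ≤ w → y.col i < x.col a) :
    cnt y.col j w + 1 ≤ cnt x.col j w := by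
  have hpos : 1 ≤ x.col a := x.pos a
  have d1 := cnt_decomp x.col a j w hj
  have d2 := cnt_decomp y.col a j w hj
  have d3 := cnt_decomp x.col a j (x.col a - 1) hj
  have d4 := cnt_decomp y.col a j (x.col a - 1) hj
  have h5 := hcnt j (x.col a - 1)
  have hA : ∀ v, (Finset.univ.filter fun i : Fin n => (i : ℕ) < (a : ℕ) ∧ x.col i ≤ v).card
      = (Finset.univ.filter fun i : Fin n => (i : ℕ) < (a : ℕ) ∧ y.col i ≤ v).card := by
    intro v
    congr 1
    refine Finset.filter_congr fun i _ => ?_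
    constructor
    · rintro ⟨h1, h2⟩; exact ⟨h1, by rw [← hpre i h1]; exact h2⟩
    · rintro ⟨h1, h2⟩; exact ⟨h1, by rw [hpre i h1]; exact h2⟩
  have hAw := hA w
  have hAw' := hA (x.col a - 1)
  have hC : (Finset.univ.filter fun i : Fin n => (a : ℕ) < (i : ℕ) ∧ (i : ℕ) < j ∧ y.col i ≤ w).card
      = (Finset.univ.filter fun i : Fin n =>
          (a : ℕ) < (i : ℕ) ∧ (i : ℕ) < j ∧ y.col i ≤ x.col a - 1).card := by
    congr 1
    refine Finset.filter_congr fun i _ => ?_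
    constructor
    · rintro ⟨h1, h2, h3⟩
      have := hrows i h1 h2 h3
      exact ⟨h1, h2, by omega⟩
    · rintro ⟨h1, h2, h3⟩
      exact ⟨h1, h2, by omega⟩
  have hm : (Finset.univ.filter fun i : Fin n =>
        (a : ℕ) < (i : ℕ) ∧ (i : ℕ) < j ∧ x.col i ≤ x.col a - 1).card
      ≤ (Finset.univ.filter fun i : Fin n =>
        (a : ℕ) < (i : ℕ) ∧ (i : ℕ) < j ∧ x.col i ≤ w).card := by
    refine Finset.card_le_card fun i hi => ?_
    simp only [Finset.mem_filter, Finset.mem_univ, true_and] at hi ⊢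
    omega
  rw [if_pos hw1] at d1
  rw [if_neg (by omega)] at d2
  rw [if_neg (by omega)] at d3
  rw [if_neg (by omega)] at d4
  omega



lemma placement_ext {x y : Placement lam} (h : x.col = y.col) : x = y := by
  cases x; cases y; simp_all

lemma cnt_congr (f g : Fin n → ℕ) (j w : ℕ) (h : ∀ i : Fin n, (i : ℕ) < j → f i = g i) :
    cnt f j w = cnt g j w := by
  rw [cnt, cnt]
  congr 1
  refine Finset.filter_congr fun i _ => ?_
  constructor
  · rintro ⟨h1, h2⟩; exact ⟨h1, by rw [← h i h1]; exact h2⟩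
  · rintro ⟨h1, h2⟩; exact ⟨h1, by rw [h i h1]; exact h2⟩

lemma cnt_swap_eq (f g : Fin n → ℕ) (a b : Fin n) (hab : a < b)
    (h1 : g a = f b) (h2 : g b = f a) (h3 : ∀ i, i ≠ a → i ≠ b → g i = f i) (j w : ℕ) :
    cnt g j w + (if (a : ℕ) < j ∧ j ≤ (b : ℕ) ∧ f a ≤ w ∧ ¬ f b ≤ w then 1 else 0)
      = cnt f j w + (if (a : ℕ) < j ∧ j ≤ (b : ℕ) ∧ f b ≤ w ∧ ¬ f a ≤ w then 1 else 0) := by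
  have hvab : (a : ℕ) < (b : ℕ) := hab
  have d1 : cnt g j w = (if (a : ℕ) < j ∧ g a ≤ w then 1 else 0)
      + (if (b : ℕ) < j ∧ g b ≤ w then 1 else 0)
      + ∑ i ∈ (Finset.univ.erase a).erase b, (if (i : ℕ) < j ∧ g i ≤ w then 1 else 0) := by
    rw [cnt, Finset.card_filter,
      sum_split_two hab.ne (fun i : Fin n => if (i : ℕ) < j ∧ g i ≤ w then 1 else 0)]
  have d2 : cnt f j w = (if (a : ℕ) < j ∧ f a ≤ w then 1 else 0)
      + (if (b : ℕ) < j ∧ f b ≤ w then 1 else 0)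
      + ∑ i ∈ (Finset.univ.erase a).erase b, (if (i : ℕ) < j ∧ f i ≤ w then 1 else 0) := by
    rw [cnt, Finset.card_filter,
      sum_split_two hab.ne (fun i : Fin n => if (i : ℕ) < j ∧ f i ≤ w then 1 else 0)]
  have htail : ∑ i ∈ (Finset.univ.erase a).erase b, (if (i : ℕ) < j ∧ g i ≤ w then 1 else 0)
      = ∑ i ∈ (Finset.univ.erase a).erase b, (if (i : ℕ) < j ∧ f i ≤ w then 1 else 0) := by
    refine Finset.sum_congr rfl fun i hi => ?_
    rw [h3 i (mem_erase2 hi).1 (mem_erase2 hi).2]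
  rw [d1, d2, htail, h1, h2]
  split_ifs <;> omega

lemma cnt_push_eq (f g : Fin n → ℕ) (a : Fin n) (c : ℕ)
    (h1 : g a = c) (h3 : ∀ i, i ≠ a → g i = f i) (hc : c ≤ f a) (j w : ℕ) :
    cnt g j w = cnt f j w + (if (a : ℕ) < j ∧ c ≤ w ∧ ¬ f a ≤ w then 1 else 0) := by
  have d1 : cnt g j w = (if (a : ℕ) < j ∧ g a ≤ w then 1 else 0)
      + ∑ i ∈ Finset.univ.erase a, (if (i : ℕ) < j ∧ g i ≤ w then 1 else 0) := by
    rw [cnt, Finset.card_filter,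
      ← Finset.add_sum_erase _ (fun i : Fin n => if (i : ℕ) < j ∧ g i ≤ w then 1 else 0)
        (Finset.mem_univ a)]
  have d2 : cnt f j w = (if (a : ℕ) < j ∧ f a ≤ w then 1 else 0)
      + ∑ i ∈ Finset.univ.erase a, (if (i : ℕ) < j ∧ f i ≤ w then 1 else 0) := by
    rw [cnt, Finset.card_filter,
      ← Finset.add_sum_erase _ (fun i : Fin n => if (i : ℕ) < j ∧ f i ≤ w then 1 else 0)
        (Finset.mem_univ a)]
  have htail : ∑ i ∈ Finset.univ.erase a, (if (i : ℕ) < j ∧ g i ≤ w then 1 else 0)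
      = ∑ i ∈ Finset.univ.erase a, (if (i : ℕ) < j ∧ f i ≤ w then 1 else 0) := by
    refine Finset.sum_congr rfl fun i hi => ?_
    rw [h3 i (Finset.mem_erase.mp hi).1]
  rw [d1, d2, htail, h1]
  split_ifs <;> omega


theorem rcovers_rho (x y : Placement lam) (h : rcovers x y) :
    rho y.col = rho x.col + 1 := by
  classical
  obtain ⟨hle, hne, hmin⟩ := h
  have hcnt := (rle_iff_cnt x y).mp hle
  -- the minimal differing row
  have hDne : (Finset.univ.filter fun i : Fin n => x.col i ≠ y.col i).Nonempty := by
    rw [Finset.filter_nonempty_iff]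
    by_contra h0
    push_neg at h0
    exact hne (placement_ext (funext fun i => h0 i (Finset.mem_univ i)))
  obtain ⟨a, haD, hamin⟩ : ∃ a ∈ (Finset.univ.filter fun i : Fin n => x.col i ≠ y.col i),
      ∀ i ∈ (Finset.univ.filter fun i : Fin n => x.col i ≠ y.col i), a ≤ i :=
    ⟨_, Finset.min'_mem _ hDne, fun i => Finset.min'_le _ i⟩
  have hxane : x.col a ≠ y.col a := (Finset.mem_filter.mp haD).2
  have hpre : ∀ i : Fin n, (i : ℕ) < (a : ℕ) → x.col i = y.col i := by
    intro i hi
    by_contra hne'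
    have h1 : a ≤ i := hamin i (Finset.mem_filter.mpr ⟨Finset.mem_univ i, hne'⟩)
    have h2 : (a : ℕ) ≤ (i : ℕ) := h1
    omega
  -- the minimal differing entry increases
  have hxa : x.col a < y.col a := by
    by_contra hge
    push_neg at hge
    have hya : y.col a < x.col a := lt_of_le_of_ne hge (Ne.symm hxane)
    have d1 := cnt_decomp x.col a ((a : ℕ) + 1) (y.col a) (by omega)
    have d2 := cnt_decomp y.col a ((a : ℕ) + 1) (y.col a) (by omega)
    have hthx : (Finset.univ.filter fun i : Fin n =>
        (a : ℕ) < (i : ℕ) ∧ (i : ℕ) < (a : ℕ) + 1 ∧ x.col i ≤ y.col a).card = 0 := by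
      rw [Finset.card_eq_zero, Finset.filter_eq_empty_iff]
      intro i _
      omega
    have hthy : (Finset.univ.filter fun i : Fin n =>
        (a : ℕ) < (i : ℕ) ∧ (i : ℕ) < (a : ℕ) + 1 ∧ y.col i ≤ y.col a).card = 0 := by
      rw [Finset.card_eq_zero, Finset.filter_eq_empty_iff]
      intro i _
      omega
    have hA : (Finset.univ.filter fun i : Fin n => (i : ℕ) < (a : ℕ) ∧ x.col i ≤ y.col a).card
        = (Finset.univ.filter fun i : Fin n => (i : ℕ) < (a : ℕ) ∧ y.col i ≤ y.col a).card := by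
      congr 1
      refine Finset.filter_congr fun i _ => ?_
      constructor
      · rintro ⟨hh1, hh2⟩; exact ⟨hh1, by rw [← hpre i hh1]; exact hh2⟩
      · rintro ⟨hh1, hh2⟩; exact ⟨hh1, by rw [hpre i hh1]; exact hh2⟩
    have h5 := hcnt ((a : ℕ) + 1) (y.col a)
    rw [if_neg (by omega)] at d1
    rw [if_pos (le_refl _)] at d2
    omega
  by_cases hcase : ∃ b : Fin n, a < b ∧ x.col a ≤ y.col b ∧ y.col b < y.col a
  · -- SWITCH case
    obtain ⟨b, hbB, hbmin'⟩ : ∃ b ∈ (Finset.univ.filter fun b : Fin n =>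
        a < b ∧ x.col a ≤ y.col b ∧ y.col b < y.col a),
        ∀ i ∈ (Finset.univ.filter fun b : Fin n =>
          a < b ∧ x.col a ≤ y.col b ∧ y.col b < y.col a), b ≤ i := by
      obtain ⟨b0, hb0⟩ := hcase
      have hBne : (Finset.univ.filter fun b : Fin n =>
          a < b ∧ x.col a ≤ y.col b ∧ y.col b < y.col a).Nonempty :=
        ⟨b0, Finset.mem_filter.mpr ⟨Finset.mem_univ _, hb0⟩⟩
      exact ⟨_, Finset.min'_mem _ hBne, fun i => Finset.min'_le _ i⟩
    obtain ⟨hab, hxab, hba⟩ := (Finset.mem_filter.mp hbB).2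
    have hbmin : ∀ i : Fin n, a < i → i < b → ¬(x.col a ≤ y.col i ∧ y.col i < y.col a) := by
      intro i hai hib hbad
      have : b ≤ i := hbmin' i (Finset.mem_filter.mpr ⟨Finset.mem_univ _, hai, hbad⟩)
      exact absurd (lt_of_le_of_lt this hib) (lt_irrefl _)
    -- construct the intermediate placement z
    let z : Placement lam :=
      { col := y.col ∘ ⇑(Equiv.swap a b)
        inj := y.inj.comp (Equiv.swap a b).injective
        pos := fun i => y.pos _
        le_part := by
          intro i
          rcases eq_or_ne i a with rfl | hia
          · simp only [Function.comp_apply, Equiv.swap_apply_left]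
            exact le_trans hba.le (y.le_part i)
          · rcases eq_or_ne i b with rfl | hib
            · simp only [Function.comp_apply, Equiv.swap_apply_right]
              exact le_trans (y.le_part a) (lam.mono hab.le)
            · rw [Function.comp_apply, Equiv.swap_apply_of_ne_of_ne hia hib]
              exact y.le_part i }
    have hz1 : z.col a = y.col b := by
      show y.col (Equiv.swap a b a) = y.col b
      rw [Equiv.swap_apply_left]
    have hz2 : z.col b = y.col a := by
      show y.col (Equiv.swap a b b) = y.col a
      rw [Equiv.swap_apply_right]
    have hz3 : ∀ i, i ≠ a → i ≠ b → z.col i = y.col i := fun i hia hib => by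
      show y.col (Equiv.swap a b i) = y.col i
      rw [Equiv.swap_apply_of_ne_of_ne hia hib]
    have hrect : ∀ i, a < i → i < b → ¬(y.col b ≤ y.col i ∧ y.col i < y.col a) := by
      intro i hai hib hbad
      exact hbmin i hai hib ⟨le_trans hxab hbad.1, hbad.2⟩
    have hrho : rho y.col = rho z.col + 1 :=
      rho_swap y.col z.col y.inj a b hab hz1 hz2 hz3 hba hrect
    have hswap_eq := fun j w => cnt_swap_eq y.col z.col a b hab hz1 hz2 hz3 j w
    have h00 : ∀ j w, ¬((a : ℕ) < j ∧ j ≤ (b : ℕ) ∧ y.col a ≤ w ∧ ¬ y.col b ≤ w) := by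
      rintro j w ⟨-, -, hh1, hh2⟩
      exact hh2 (le_trans hba.le hh1)
    have hzy : rle z y := by
      rw [rle_iff_cnt]
      intro j w
      have heq := hswap_eq j w
      rw [if_neg (h00 j w)] at heq
      split_ifs at heq <;> omega
    have hxz : rle x z := by
      rw [rle_iff_cnt]
      intro j w
      have heq := hswap_eq j w
      rw [if_neg (h00 j w)] at heq
      by_cases h2 : (a : ℕ) < j ∧ j ≤ (b : ℕ) ∧ y.col b ≤ w ∧ ¬ y.col a ≤ w
      · rw [if_pos h2] at heq
        obtain ⟨hj, hjb, hbw, hnaw⟩ := h2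
        have hstrict := cnt_strict x y hcnt a hpre j w hj (le_trans hxab hbw) (by omega)
          (fun i hai hij hyi => by
            have hiF : a < i := Fin.lt_def.mpr hai
            have hibF : i < b := Fin.lt_def.mpr (by have : (b : ℕ) ≥ j := hjb; omega)
            have := hbmin i hiF hibF
            omega)
        omega
      · rw [if_neg h2] at heq
        have := hcnt j w
        omega
    have hzny : z ≠ y := by
      intro hzy'
      have he : z.col a = y.col a := by rw [hzy']
      rw [hz1] at he
      exact absurd (y.inj he) hab.ne'
    rcases hmin z hxz hzy with hzx | hzy'
    · rw [hzx] at hrho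
      exact hrho
    · exact absurd hzy' hzny
  · -- PUSH case
    push_neg at hcase
    have hnoB : ∀ i : Fin n, a < i → ¬(x.col a ≤ y.col i ∧ y.col i < y.col a) := by
      rintro i hai ⟨hh1, hh2⟩
      exact absurd hh2 (not_lt.mpr (hcase i hai hh1))
    have hxaE : x.col a ∈ (Finset.Icc (x.col a) (y.col a - 1)).filter
        (fun d => ∀ i, y.col i ≠ d) := by
      rw [Finset.mem_filter, Finset.mem_Icc]
      refine ⟨⟨le_refl _, by omega⟩, ?_⟩
      intro i heq
      rcases lt_trichotomy i a with hia | rfl | hai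
      · have hxi : x.col i = y.col i := hpre i (Fin.lt_def.mp hia)
        exact absurd (x.inj (by rw [hxi, heq])) hia.ne
      · omega
      · exact absurd ⟨by omega, by omega⟩ (hnoB i hai)
    obtain ⟨c, hcE, hcmax⟩ : ∃ c ∈ (Finset.Icc (x.col a) (y.col a - 1)).filter
        (fun d => ∀ i, y.col i ≠ d),
        ∀ d ∈ (Finset.Icc (x.col a) (y.col a - 1)).filter (fun d => ∀ i, y.col i ≠ d),
          d ≤ c :=
      ⟨_, Finset.max'_mem _ ⟨_, hxaE⟩, fun d => Finset.le_max' _ d⟩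
    rw [Finset.mem_filter, Finset.mem_Icc] at hcE
    obtain ⟨⟨hc1, hc2⟩, hcemp⟩ := hcE
    have hcya : c < y.col a := by omega
    have hfill : ∀ d, c < d → d < y.col a → ∃ i : Fin n, i < a ∧ y.col i = d := by
      intro d hcd hdy
      by_cases hdemp : ∀ i : Fin n, y.col i ≠ d
      · have hdE : d ∈ (Finset.Icc (x.col a) (y.col a - 1)).filter
            (fun d => ∀ i, y.col i ≠ d) := by
          rw [Finset.mem_filter, Finset.mem_Icc]
          exact ⟨⟨by omega, by omega⟩, hdemp⟩
        have := hcmax d hdE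
        omega
      · push_neg at hdemp
        obtain ⟨i, hid⟩ := hdemp
        refine ⟨i, ?_, hid⟩
        rcases lt_trichotomy i a with hia | rfl | hai
        · exact hia
        · omega
        · exact absurd ⟨by omega, by omega⟩ (hnoB i hai)
    let z : Placement lam :=
      { col := fun i => if i = a then c else y.col i
        inj := by
          intro i k hik
          simp only at hik
          by_cases hi : i = a <;> by_cases hk : k = a
          · rw [hi, hk]
          · rw [if_pos hi, if_neg hk] at hik
            exact absurd hik.symm (hcemp k)
          · rw [if_neg hi, if_pos hk] at hik
            exact absurd hik (hcemp i)
          · rw [if_neg hi, if_neg hk] at hik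
            exact y.inj hik
        pos := fun i => by
          by_cases hi : i = a
          · rw [if_pos hi]
            have := x.pos a
            omega
          · rw [if_neg hi]
            exact y.pos i
        le_part := fun i => by
          by_cases hi : i = a
          · subst hi
            rw [if_pos rfl]
            exact le_trans hcya.le (y.le_part i)
          · rw [if_neg hi]
            exact y.le_part i }
    have hz1 : z.col a = c := if_pos rfl
    have hz3 : ∀ i, i ≠ a → z.col i = y.col i := fun i hi => if_neg hi
    have hrho : rho y.col = rho z.col + 1 :=
      rho_push y.col z.col y.inj a c hz1 hz3 hcya hcemp hfill
    have hpush_eq := fun j w => cnt_push_eq y.col z.col a c hz1 hz3 hcya.le j w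
    have hzy : rle z y := by
      rw [rle_iff_cnt]
      intro j w
      have heq := hpush_eq j w
      split_ifs at heq <;> omega
    have hxz : rle x z := by
      rw [rle_iff_cnt]
      intro j w
      have heq := hpush_eq j w
      by_cases h2 : (a : ℕ) < j ∧ c ≤ w ∧ ¬ y.col a ≤ w
      · rw [if_pos h2] at heq
        obtain ⟨hj, hcw, hnyaw⟩ := h2
        have hstrict := cnt_strict x y hcnt a hpre j w hj (le_trans hc1 hcw) (by omega)
          (fun i hai hij hyi => by
            have := hnoB i (Fin.lt_def.mpr hai)
            omega)
        omega
      · rw [if_neg h2] at heq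
        have := hcnt j w
        omega
    have hzny : z ≠ y := by
      intro hzy'
      have he : z.col a = y.col a := by rw [hzy']
      rw [hz1] at he
      omega
    rcases hmin z hxz hzy with hzx | hzy'
    · rw [hzx] at hrho
      exact hrho
    · exact absurd hzy' hzny

lemma gauss_sum (m : ℕ) : 2 * ∑ i ∈ Finset.range m, (i + 1) = m * m + m := by
  induction m with
  | zero => simp
  | succ k ih =>
    rw [Finset.sum_range_succ]
    have expand : (k + 1) * (k + 1) = k * k + 2 * k + 1 := by ring
    omega

/-- The inversion count of the completed permutation is a rank function on
the rook poset: it is `0` on the minimum `(1, 2, …, n)` and increases by exactly `1` along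
covering relations. -/
theorem rank_is_grading {n : ℕ} (lam : Partition n) :
    (∀ b : Placement lam, (∀ i : Fin n, b.col i = (i : ℕ) + 1) → b.rank = 0) ∧
    (∀ x y : Placement lam, rcovers x y → y.rank = x.rank + 1) := by
  constructor
  · intro b hb
    have hf := rank_formula b
    have hinv : invc b.col = 0 := by
      rw [invc, Finset.card_eq_zero, Finset.filter_eq_empty_iff]
      rintro p -
      rw [hb p.1, hb p.2]
      rintro ⟨hh1, hh2⟩
      have hv : (p.1 : ℕ) < (p.2 : ℕ) := hh1
      omega
    have hsum : ∑ i : Fin n, b.col i = ∑ i : Fin n, ((i : ℕ) + 1) :=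
      Finset.sum_congr rfl fun i _ => hb i
    have hgauss : 2 * ∑ i ∈ Finset.range n, (i + 1) = n * n + n := gauss_sum n
    have hreindex : ∑ i : Fin n, ((i : ℕ) + 1) = ∑ i ∈ Finset.range n, (i + 1) :=
      Fin.sum_univ_eq_sum_range (fun i => i + 1) n
    rw [rho] at hf
    omega
  · intro x y hcov
    have h1 := rank_formula x
    have h2 := rank_formula y
    have h3 := rcovers_rho x y hcov
    omega

end RookPoset
end

section
/- Let λ¹ and λ² be partitions and let λ be a partition whose GJW sequence is the concatenation of the GJW sequence of λ¹, a single entry 0, and the GJW sequence of λ². Then the rook poset P_λ is isomorphic to the product poset P_{λ¹} × P_{λ²}. -/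
namespace RookPoset

/-! ### Auxiliary lemmas for Statement 4 -/

theorem Placement.ext' {n : ℕ} {lam : Partition n} {x y : Placement lam}
    (h : x.col = y.col) : x = y := by
  cases x; cases y; simpa using h

theorem forall₂_append_split {α : Type*} {R : α → α → Prop} :
    ∀ {a c b d : List α}, a.length = c.length →
      List.Forall₂ R (a ++ b) (c ++ d) → List.Forall₂ R a c ∧ List.Forall₂ R b d
  | [], [], b, d, _, h => ⟨List.Forall₂.nil, h⟩
  | [], _ :: _, _, _, hl, _ => by simp at hl
  | _ :: _, [], _, _, hl, _ => by simp at hl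
  | x :: a, y :: c, b, d, hl, h => by
    rcases h with _ | ⟨hxy, h⟩
    obtain ⟨h1, h2⟩ := forall₂_append_split (by simpa using hl) h
    exact ⟨List.Forall₂.cons hxy h1, h2⟩

theorem sort_union_of_lt (A B : Finset ℕ) (hAB : ∀ a ∈ A, ∀ b ∈ B, a < b) :
    (A ∪ B).sort (· ≤ ·) = A.sort (· ≤ ·) ++ B.sort (· ≤ ·) := by
  have hdisj : Disjoint A B := by
    rw [Finset.disjoint_left]
    intro a ha hb
    exact absurd rfl (hAB a ha a hb).ne'
  refine (fun hp hs => List.Perm.eq_of_pairwise' (Finset.pairwise_sort _ _) hs hp) ?_ ?_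
  · rw [← Multiset.coe_eq_coe, ← Multiset.coe_add, Finset.sort_eq, Finset.sort_eq,
      Finset.sort_eq, ← Finset.disjUnion_eq_union A B hdisj]
    rfl
  · rw [List.pairwise_append]
    refine ⟨Finset.pairwise_sort _ _, Finset.pairwise_sort _ _, fun a ha b hb => ?_⟩
    exact (hAB a (by simpa using (Finset.mem_sort _).1 ha)
      b (by simpa using (Finset.mem_sort _).1 hb)).le

theorem sort_image_add (B : Finset ℕ) (c : ℕ) :
    (B.image (· + c)).sort (· ≤ ·) = (B.sort (· ≤ ·)).map (· + c) := by
  refine (fun hp hs => List.Perm.eq_of_pairwise' (Finset.pairwise_sort _ _) hs hp) ?_ ?_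
  · rw [← Multiset.coe_eq_coe, Finset.sort_eq,
      Finset.image_val_of_injOn (Set.injOn_of_injective (add_left_injective c)),
      ← Multiset.map_coe, Finset.sort_eq]
  · exact List.Pairwise.map _ (fun a b hab => by simpa using hab) (Finset.pairwise_sort _ _)

theorem initSeg_saturate {m : ℕ} (f : Fin m → ℕ) {j : ℕ} (hj : m ≤ j) :
    initSeg f j = initSeg f m := by
  unfold initSeg
  rw [Finset.filter_true_of_mem (fun i _ => lt_of_lt_of_le i.isLt hj),
    Finset.filter_true_of_mem (fun i _ => i.isLt)]

theorem card_filter_lt_fin (N m : ℕ) (hm : m ≤ N) :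
    (Finset.univ.filter fun i : Fin N => (i : ℕ) < m).card = m := by
  rw [← Finset.card_image_of_injective _ Fin.val_injective]
  have h : (Finset.univ.filter fun i : Fin N => (i : ℕ) < m).image Fin.val
      = Finset.range m := by
    ext a
    simp only [Finset.mem_image, Finset.mem_filter, Finset.mem_univ, true_and,
      Finset.mem_range]
    constructor
    · rintro ⟨i, hi, rfl⟩; exact hi
    · intro ha; exact ⟨⟨a, lt_of_lt_of_le ha hm⟩, ha, rfl⟩
  rw [h, Finset.card_range]

section Product

variable {n₁ n₂ : ℕ} {lam1 : Partition n₁} {lam2 : Partition n₂}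
  {lam : Partition (n₁ + 1 + n₂)}

theorem lt_aux₁ (i : Fin n₁) : (i : ℕ) < n₁ + 1 + n₂ := by
  have := i.isLt; omega

theorem add_lt_aux (j : Fin n₂) : n₁ + 1 + (j : ℕ) < n₁ + 1 + n₂ := by
  have := j.isLt; omega

theorem mid_lt : n₁ < n₁ + 1 + n₂ := by omega

theorem sub_lt_aux (i : Fin (n₁ + 1 + n₂)) (h : n₁ < (i : ℕ)) :
    (i : ℕ) - (n₁ + 1) < n₂ := by
  have := i.isLt; omega

theorem lowCols (hpm : lam.part ⟨n₁, mid_lt⟩ = n₁ + 1) (x : Placement lam) :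
    (Finset.univ.filter fun i : Fin (n₁ + 1 + n₂) => (i : ℕ) < n₁ + 1).image x.col
      = Finset.Icc 1 (n₁ + 1) := by
  apply Finset.eq_of_subset_of_card_le
  · intro a ha
    simp only [Finset.mem_image, Finset.mem_filter, Finset.mem_univ, true_and] at ha
    obtain ⟨i, hi, rfl⟩ := ha
    refine Finset.mem_Icc.2 ⟨x.pos i, ?_⟩
    calc x.col i ≤ lam.part i := x.le_part i
      _ ≤ lam.part ⟨n₁, mid_lt⟩ := lam.mono (Fin.le_def.2 (show (i : ℕ) ≤ n₁ by omega))
      _ = n₁ + 1 := hpm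
  · rw [Nat.card_Icc, Finset.card_image_of_injective _ x.inj,
      card_filter_lt_fin _ _ (by omega)]
    omega

theorem high_col (hpm : lam.part ⟨n₁, mid_lt⟩ = n₁ + 1) (x : Placement lam)
    (i : Fin (n₁ + 1 + n₂)) (hi : n₁ + 1 ≤ (i : ℕ)) : n₁ + 2 ≤ x.col i := by
  by_contra hc
  have hmem : x.col i ∈ Finset.Icc 1 (n₁ + 1) := Finset.mem_Icc.2 ⟨x.pos i, by omega⟩
  rw [← lowCols hpm x] at hmem
  simp only [Finset.mem_image, Finset.mem_filter, Finset.mem_univ, true_and] at hmem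
  obtain ⟨k, hk, hke⟩ := hmem
  rw [x.inj hke] at hk
  omega

def toP1 (hp1 : ∀ i : Fin n₁, lam.part ⟨i, lt_aux₁ i⟩ = lam1.part i)
    (x : Placement lam) : Placement lam1 where
  col i := x.col ⟨i, lt_aux₁ i⟩
  inj a b hab := by
    have h : (⟨(a : ℕ), lt_aux₁ a⟩ : Fin (n₁ + 1 + n₂)) = ⟨(b : ℕ), lt_aux₁ b⟩ := x.inj hab
    have h2 : (a : ℕ) = (b : ℕ) := by simpa using h
    exact Fin.ext h2
  pos i := x.pos _
  le_part i := (hp1 i) ▸ x.le_part _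

def toP2 (hpm : lam.part ⟨n₁, mid_lt⟩ = n₁ + 1)
    (hp2 : ∀ j : Fin n₂, lam.part ⟨n₁ + 1 + (j : ℕ), add_lt_aux j⟩ = lam2.part j + (n₁ + 1))
    (x : Placement lam) : Placement lam2 where
  col j := x.col ⟨n₁ + 1 + (j : ℕ), add_lt_aux j⟩ - (n₁ + 1)
  inj a b hab := by
    have hab' : x.col ⟨n₁ + 1 + (a : ℕ), add_lt_aux a⟩ - (n₁ + 1)
        = x.col ⟨n₁ + 1 + (b : ℕ), add_lt_aux b⟩ - (n₁ + 1) := hab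
    have ha : n₁ + 2 ≤ x.col ⟨n₁ + 1 + (a : ℕ), add_lt_aux a⟩ :=
      high_col hpm x _ (Nat.le_add_right _ _)
    have hb2 : n₁ + 2 ≤ x.col ⟨n₁ + 1 + (b : ℕ), add_lt_aux b⟩ :=
      high_col hpm x _ (Nat.le_add_right _ _)
    have h : (⟨n₁ + 1 + (a : ℕ), add_lt_aux a⟩ : Fin (n₁ + 1 + n₂))
        = ⟨n₁ + 1 + (b : ℕ), add_lt_aux b⟩ := x.inj (by omega)
    have h2 : n₁ + 1 + (a : ℕ) = n₁ + 1 + (b : ℕ) := by simpa using h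
    exact Fin.ext (by omega)
  pos j := by
    have h : n₁ + 2 ≤ x.col ⟨n₁ + 1 + (j : ℕ), add_lt_aux j⟩ :=
      high_col hpm x _ (Nat.le_add_right _ _)
    show 1 ≤ x.col ⟨n₁ + 1 + (j : ℕ), add_lt_aux j⟩ - (n₁ + 1)
    omega
  le_part j := by
    have h : x.col ⟨n₁ + 1 + (j : ℕ), add_lt_aux j⟩
        ≤ lam.part ⟨n₁ + 1 + (j : ℕ), add_lt_aux j⟩ := x.le_part _
    have h2 : lam.part ⟨n₁ + 1 + (j : ℕ), add_lt_aux j⟩ = lam2.part j + (n₁ + 1) := hp2 j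
    show x.col ⟨n₁ + 1 + (j : ℕ), add_lt_aux j⟩ - (n₁ + 1) ≤ lam2.part j
    omega

theorem image_col_subset (hb : ∀ i : Fin n₁, lam1.part i ≤ n₁ + 1) (p : Placement lam1) :
    Finset.univ.image p.col ⊆ Finset.Icc 1 (n₁ + 1) := by
  intro a ha
  simp only [Finset.mem_image, Finset.mem_univ, true_and] at ha
  obtain ⟨i, rfl⟩ := ha
  exact Finset.mem_Icc.2 ⟨p.pos i, (p.le_part i).trans (hb i)⟩

theorem missing_card (hb : ∀ i : Fin n₁, lam1.part i ≤ n₁ + 1) (p : Placement lam1) :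
    (Finset.Icc 1 (n₁ + 1) \ Finset.univ.image p.col).card = 1 := by
  rw [Finset.card_sdiff_of_subset (image_col_subset hb p),
    Finset.card_image_of_injective _ p.inj, Nat.card_Icc, Finset.card_univ,
    Fintype.card_fin]
  omega

def missingCol (hb : ∀ i : Fin n₁, lam1.part i ≤ n₁ + 1) (p : Placement lam1) : ℕ :=
  (Finset.Icc 1 (n₁ + 1) \ Finset.univ.image p.col).min'
    (Finset.card_pos.1 (by rw [missing_card hb p]; omega))

theorem missingCol_mem (hb : ∀ i : Fin n₁, lam1.part i ≤ n₁ + 1) (p : Placement lam1) :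
    missingCol hb p ∈ Finset.Icc 1 (n₁ + 1) \ Finset.univ.image p.col :=
  Finset.min'_mem _ _

theorem missingCol_uniq (hb : ∀ i : Fin n₁, lam1.part i ≤ n₁ + 1) (p : Placement lam1)
    {a : ℕ} (ha : a ∈ Finset.Icc 1 (n₁ + 1) \ Finset.univ.image p.col) :
    a = missingCol hb p := by
  obtain ⟨b, hbb⟩ := Finset.card_eq_one.1 (missing_card hb p)
  have h2 := missingCol_mem hb p
  rw [hbb, Finset.mem_singleton] at ha h2
  rw [ha, h2]

theorem missingCol_le (hb : ∀ i : Fin n₁, lam1.part i ≤ n₁ + 1) (p : Placement lam1) :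
    1 ≤ missingCol hb p ∧ missingCol hb p ≤ n₁ + 1 :=
  Finset.mem_Icc.1 (Finset.mem_sdiff.1 (missingCol_mem hb p)).1

theorem missingCol_not_image (hb : ∀ i : Fin n₁, lam1.part i ≤ n₁ + 1) (p : Placement lam1)
    (i : Fin n₁) : p.col i ≠ missingCol hb p := by
  intro h
  exact (Finset.mem_sdiff.1 (missingCol_mem hb p)).2
    (h ▸ Finset.mem_image_of_mem _ (Finset.mem_univ i))

theorem toP1_col_spec (hp1 : ∀ i : Fin n₁, lam.part ⟨i, lt_aux₁ i⟩ = lam1.part i) (x : Placement lam) (i : Fin n₁) :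
    (toP1 hp1 x).col i = x.col ⟨(i : ℕ), lt_aux₁ i⟩ := rfl

theorem toP2_col_spec (hpm : lam.part ⟨n₁, mid_lt⟩ = n₁ + 1) (hp2 : ∀ j : Fin n₂, lam.part ⟨n₁ + 1 + (j : ℕ), add_lt_aux j⟩ = lam2.part j + (n₁ + 1)) (x : Placement lam) (j : Fin n₂) :
    (toP2 hpm hp2 x).col j = x.col ⟨n₁ + 1 + (j : ℕ), add_lt_aux j⟩ - (n₁ + 1) := rfl

theorem toP2_col_add (hpm : lam.part ⟨n₁, mid_lt⟩ = n₁ + 1) (hp2 : ∀ j : Fin n₂, lam.part ⟨n₁ + 1 + (j : ℕ), add_lt_aux j⟩ = lam2.part j + (n₁ + 1)) (x : Placement lam) (j : Fin n₂) :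
    (toP2 hpm hp2 x).col j + (n₁ + 1) = x.col ⟨n₁ + 1 + (j : ℕ), add_lt_aux j⟩ := by
  rw [toP2_col_spec]
  have h : n₁ + 2 ≤ x.col ⟨n₁ + 1 + (j : ℕ), add_lt_aux j⟩ :=
    high_col hpm x _ (Nat.le_add_right _ _)
  omega

def bwdCol (hb : ∀ i : Fin n₁, lam1.part i ≤ n₁ + 1) (p : Placement lam1 × Placement lam2) (i : Fin (n₁ + 1 + n₂)) : ℕ :=
  if h1 : (i : ℕ) < n₁ then p.1.col ⟨i, h1⟩
  else if h2 : (i : ℕ) = n₁ then missingCol hb p.1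
  else p.2.col ⟨(i : ℕ) - (n₁ + 1), sub_lt_aux i (by omega)⟩ + (n₁ + 1)

theorem bwdCol_lt (hb : ∀ i : Fin n₁, lam1.part i ≤ n₁ + 1) (p : Placement lam1 × Placement lam2) {i : Fin (n₁ + 1 + n₂)}
    (h1 : (i : ℕ) < n₁) : bwdCol hb p i = p.1.col ⟨i, h1⟩ := by
  unfold bwdCol
  split_ifs
  rfl

theorem bwdCol_mid (hb : ∀ i : Fin n₁, lam1.part i ≤ n₁ + 1) (p : Placement lam1 × Placement lam2) {i : Fin (n₁ + 1 + n₂)}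
    (h2 : (i : ℕ) = n₁) : bwdCol hb p i = missingCol hb p.1 := by
  unfold bwdCol
  split_ifs with h
  · exact absurd h (by omega)
  · rfl

theorem bwdCol_gt (hb : ∀ i : Fin n₁, lam1.part i ≤ n₁ + 1) (p : Placement lam1 × Placement lam2) {i : Fin (n₁ + 1 + n₂)}
    (h3 : n₁ < (i : ℕ)) :
    bwdCol hb p i = p.2.col ⟨(i : ℕ) - (n₁ + 1), sub_lt_aux i h3⟩ + (n₁ + 1) := by
  unfold bwdCol
  split_ifs with h h'
  · exact absurd h (by omega)
  · exact absurd h' (by omega)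
  · rfl

def bwd (hp1 : ∀ i : Fin n₁, lam.part ⟨i, lt_aux₁ i⟩ = lam1.part i) (hpm : lam.part ⟨n₁, mid_lt⟩ = n₁ + 1) (hp2 : ∀ j : Fin n₂, lam.part ⟨n₁ + 1 + (j : ℕ), add_lt_aux j⟩ = lam2.part j + (n₁ + 1)) (hb : ∀ i : Fin n₁, lam1.part i ≤ n₁ + 1) (p : Placement lam1 × Placement lam2) : Placement lam where
  col := bwdCol hb p
  inj a b hab := by
    have hm := missingCol_le hb p.1
    rcases Nat.lt_trichotomy (a : ℕ) n₁ with ha | ha | ha <;>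
      rcases Nat.lt_trichotomy (b : ℕ) n₁ with hb2 | hb2 | hb2
    · rw [bwdCol_lt hb p ha, bwdCol_lt hb p hb2] at hab
      have h : (⟨(a : ℕ), ha⟩ : Fin n₁) = ⟨(b : ℕ), hb2⟩ := p.1.inj hab
      have h2 : (a : ℕ) = (b : ℕ) := by simpa using h
      exact Fin.ext h2
    · rw [bwdCol_lt hb p ha, bwdCol_mid hb p hb2] at hab
      exact absurd hab (missingCol_not_image hb p.1 _)
    · rw [bwdCol_lt hb p ha, bwdCol_gt hb p hb2] at hab
      have h1 := (p.1.le_part ⟨(a : ℕ), ha⟩).trans (hb ⟨(a : ℕ), ha⟩)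
      have h2 := p.2.pos ⟨(b : ℕ) - (n₁ + 1), sub_lt_aux b hb2⟩
      omega
    · rw [bwdCol_mid hb p ha, bwdCol_lt hb p hb2] at hab
      exact absurd hab.symm (missingCol_not_image hb p.1 _)
    · exact Fin.ext (by omega)
    · rw [bwdCol_mid hb p ha, bwdCol_gt hb p hb2] at hab
      have h2 := p.2.pos ⟨(b : ℕ) - (n₁ + 1), sub_lt_aux b hb2⟩
      omega
    · rw [bwdCol_gt hb p ha, bwdCol_lt hb p hb2] at hab
      have h1 := (p.1.le_part ⟨(b : ℕ), hb2⟩).trans (hb ⟨(b : ℕ), hb2⟩)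
      have h2 := p.2.pos ⟨(a : ℕ) - (n₁ + 1), sub_lt_aux a ha⟩
      omega
    · rw [bwdCol_gt hb p ha, bwdCol_mid hb p hb2] at hab
      have h2 := p.2.pos ⟨(a : ℕ) - (n₁ + 1), sub_lt_aux a ha⟩
      omega
    · rw [bwdCol_gt hb p ha, bwdCol_gt hb p hb2] at hab
      have h : (⟨(a : ℕ) - (n₁ + 1), sub_lt_aux a ha⟩ : Fin n₂)
          = ⟨(b : ℕ) - (n₁ + 1), sub_lt_aux b hb2⟩ := p.2.inj (by omega)
      have h2 : (a : ℕ) - (n₁ + 1) = (b : ℕ) - (n₁ + 1) := by simpa using h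
      exact Fin.ext (by omega)
  pos i := by
    rcases Nat.lt_trichotomy (i : ℕ) n₁ with hi | hi | hi
    · rw [bwdCol_lt hb p hi]; exact p.1.pos _
    · rw [bwdCol_mid hb p hi]; exact (missingCol_le hb p.1).1
    · rw [bwdCol_gt hb p hi]; omega
  le_part i := by
    rcases Nat.lt_trichotomy (i : ℕ) n₁ with hi | hi | hi
    · rw [bwdCol_lt hb p hi]
      calc p.1.col ⟨i, hi⟩ ≤ lam1.part ⟨i, hi⟩ := p.1.le_part _
        _ = lam.part ⟨(i : ℕ), lt_aux₁ ⟨(i : ℕ), hi⟩⟩ := (hp1 _).symm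
        _ = lam.part i := congrArg lam.part (Fin.ext rfl)
    · rw [bwdCol_mid hb p hi]
      calc missingCol hb p.1 ≤ n₁ + 1 := (missingCol_le hb p.1).2
        _ = lam.part ⟨n₁, mid_lt⟩ := hpm.symm
        _ = lam.part i := congrArg lam.part (Fin.ext hi.symm)
    · rw [bwdCol_gt hb p hi]
      calc p.2.col ⟨(i : ℕ) - (n₁ + 1), sub_lt_aux i hi⟩ + (n₁ + 1)
          ≤ lam2.part ⟨(i : ℕ) - (n₁ + 1), sub_lt_aux i hi⟩ + (n₁ + 1) := by
            have := p.2.le_part ⟨(i : ℕ) - (n₁ + 1), sub_lt_aux i hi⟩; omega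
        _ = lam.part ⟨n₁ + 1 + ((⟨(i : ℕ) - (n₁ + 1), sub_lt_aux i hi⟩ : Fin n₂) : ℕ),
              add_lt_aux ⟨(i : ℕ) - (n₁ + 1), sub_lt_aux i hi⟩⟩ := (hp2 _).symm
        _ = lam.part i :=
            congrArg lam.part (Fin.ext (show n₁ + 1 + ((i : ℕ) - (n₁ + 1)) = (i : ℕ) by omega))

theorem bwd_col_spec (hp1 : ∀ i : Fin n₁, lam.part ⟨i, lt_aux₁ i⟩ = lam1.part i) (hpm : lam.part ⟨n₁, mid_lt⟩ = n₁ + 1) (hp2 : ∀ j : Fin n₂, lam.part ⟨n₁ + 1 + (j : ℕ), add_lt_aux j⟩ = lam2.part j + (n₁ + 1)) (hb : ∀ i : Fin n₁, lam1.part i ≤ n₁ + 1) (p : Placement lam1 × Placement lam2) :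
    (bwd hp1 hpm hp2 hb p).col = bwdCol hb p := rfl

theorem bwd_toP (hp1 : ∀ i : Fin n₁, lam.part ⟨i, lt_aux₁ i⟩ = lam1.part i) (hpm : lam.part ⟨n₁, mid_lt⟩ = n₁ + 1) (hp2 : ∀ j : Fin n₂, lam.part ⟨n₁ + 1 + (j : ℕ), add_lt_aux j⟩ = lam2.part j + (n₁ + 1)) (hb : ∀ i : Fin n₁, lam1.part i ≤ n₁ + 1) (x : Placement lam) :
    bwd hp1 hpm hp2 hb (toP1 hp1 x, toP2 hpm hp2 x) = x := by
  apply Placement.ext'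
  rw [bwd_col_spec]
  funext i
  rcases Nat.lt_trichotomy (i : ℕ) n₁ with hi | hi | hi
  · rw [bwdCol_lt hb _ hi]
    rw [toP1_col_spec]
  · rw [bwdCol_mid hb _ hi]
    refine (missingCol_uniq hb _ (Finset.mem_sdiff.2 ⟨?_, ?_⟩)).symm
    · refine Finset.mem_Icc.2 ⟨x.pos i, ?_⟩
      calc x.col i ≤ lam.part i := x.le_part i
        _ = lam.part ⟨n₁, mid_lt⟩ := congrArg lam.part (Fin.ext hi)
        _ = n₁ + 1 := hpm
    · simp only [Finset.mem_image, Finset.mem_univ, true_and]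
      rintro ⟨k, hk⟩
      rw [toP1_col_spec] at hk
      have h2 : (k : ℕ) = (i : ℕ) := congrArg Fin.val (x.inj hk)
      have := k.isLt
      omega
  · rw [bwdCol_gt hb _ hi, toP2_col_add]
    exact congrArg x.col
      (Fin.ext (show n₁ + 1 + ((i : ℕ) - (n₁ + 1)) = (i : ℕ) by omega))

theorem toP_bwd (hp1 : ∀ i : Fin n₁, lam.part ⟨i, lt_aux₁ i⟩ = lam1.part i) (hpm : lam.part ⟨n₁, mid_lt⟩ = n₁ + 1) (hp2 : ∀ j : Fin n₂, lam.part ⟨n₁ + 1 + (j : ℕ), add_lt_aux j⟩ = lam2.part j + (n₁ + 1)) (hb : ∀ i : Fin n₁, lam1.part i ≤ n₁ + 1) (p : Placement lam1 × Placement lam2) :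
    (toP1 hp1 (bwd hp1 hpm hp2 hb p), toP2 hpm hp2 (bwd hp1 hpm hp2 hb p)) = p := by
  refine Prod.ext ?_ ?_
  · apply Placement.ext'
    funext i
    rw [toP1_col_spec, bwd_col_spec,
      bwdCol_lt hb p (show ((⟨(i : ℕ), lt_aux₁ i⟩ : Fin (n₁ + 1 + n₂)) : ℕ) < n₁ from i.isLt)]
  · apply Placement.ext'
    funext j
    rw [toP2_col_spec, bwd_col_spec,
      bwdCol_gt hb p (show n₁ < ((⟨n₁ + 1 + (j : ℕ), add_lt_aux j⟩ : Fin (n₁ + 1 + n₂)) : ℕ)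
        by show n₁ < n₁ + 1 + (j : ℕ); omega),
      Nat.add_sub_cancel]
    exact congrArg p.2.col (Fin.ext (show n₁ + 1 + (j : ℕ) - (n₁ + 1) = (j : ℕ) by omega))

theorem initSeg_low (hp1 : ∀ i : Fin n₁, lam.part ⟨i, lt_aux₁ i⟩ = lam1.part i) (x : Placement lam) {j : ℕ} (hj : j ≤ n₁) :
    initSeg x.col j = initSeg (toP1 hp1 x).col j := by
  unfold initSeg
  congr 1
  ext a
  simp only [Finset.mem_image, Finset.mem_filter, Finset.mem_univ, true_and]
  constructor
  · rintro ⟨i, hi, rfl⟩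
    refine ⟨⟨(i : ℕ), by omega⟩, hi, ?_⟩
    rw [toP1_col_spec]
  · rintro ⟨i, hi, rfl⟩
    exact ⟨⟨(i : ℕ), lt_aux₁ i⟩, hi, (toP1_col_spec hp1 x i).symm⟩

theorem initSeg_high (hpm : lam.part ⟨n₁, mid_lt⟩ = n₁ + 1) (hp2 : ∀ j : Fin n₂, lam.part ⟨n₁ + 1 + (j : ℕ), add_lt_aux j⟩ = lam2.part j + (n₁ + 1)) (x : Placement lam) (j : ℕ) :
    initSeg x.col (n₁ + 1 + j) = (Finset.Icc 1 (n₁ + 1)).sort (· ≤ ·)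
      ++ (initSeg (toP2 hpm hp2 x).col j).map (· + (n₁ + 1)) := by
  have himg : (Finset.univ.filter fun i : Fin (n₁ + 1 + n₂) => (i : ℕ) < n₁ + 1 + j).image
        x.col
      = Finset.Icc 1 (n₁ + 1) ∪
        ((Finset.univ.filter fun i : Fin n₂ => (i : ℕ) < j).image
          (toP2 hpm hp2 x).col).image (· + (n₁ + 1)) := by
    ext a
    simp only [Finset.mem_image, Finset.mem_filter, Finset.mem_univ, true_and,
      Finset.mem_union]
    constructor
    · rintro ⟨i, hi, rfl⟩
      by_cases hlo : (i : ℕ) < n₁ + 1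
      · left
        rw [← lowCols hpm x]
        exact Finset.mem_image_of_mem _ (by simp [hlo]; omega)
      · right
        have hgt : n₁ < (i : ℕ) := by omega
        refine ⟨(toP2 hpm hp2 x).col ⟨(i : ℕ) - (n₁ + 1), sub_lt_aux i hgt⟩,
          ⟨⟨(i : ℕ) - (n₁ + 1), sub_lt_aux i hgt⟩,
            show (i : ℕ) - (n₁ + 1) < j by omega, rfl⟩, ?_⟩
        rw [toP2_col_add]
        exact congrArg x.col
          (Fin.ext (show n₁ + 1 + ((i : ℕ) - (n₁ + 1)) = (i : ℕ) by omega))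
    · rintro (ha | ⟨c, ⟨i, hi, rfl⟩, rfl⟩)
      · rw [← lowCols hpm x] at ha
        simp only [Finset.mem_image, Finset.mem_filter, Finset.mem_univ, true_and] at ha
        obtain ⟨i, hi, rfl⟩ := ha
        exact ⟨i, by omega, rfl⟩
      · refine ⟨⟨n₁ + 1 + (i : ℕ), add_lt_aux i⟩,
          show n₁ + 1 + (i : ℕ) < n₁ + 1 + j by omega, ?_⟩
        exact (toP2_col_add hpm hp2 x i).symm
  unfold initSeg
  rw [himg, sort_union_of_lt, sort_image_add]
  intro a ha b hbb
  simp only [Finset.mem_image, Finset.mem_filter, Finset.mem_univ, true_and] at hbb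
  obtain ⟨c, ⟨i, hi, rfl⟩, rfl⟩ := hbb
  have h1 := (toP2 hpm hp2 x).pos i
  have h2 := Finset.mem_Icc.1 ha
  omega

theorem rle_iff (hp1 : ∀ i : Fin n₁, lam.part ⟨i, lt_aux₁ i⟩ = lam1.part i) (hpm : lam.part ⟨n₁, mid_lt⟩ = n₁ + 1) (hp2 : ∀ j : Fin n₂, lam.part ⟨n₁ + 1 + (j : ℕ), add_lt_aux j⟩ = lam2.part j + (n₁ + 1)) (x y : Placement lam) :
    rle x y ↔ rle (toP1 hp1 x) (toP1 hp1 y) ∧ rle (toP2 hpm hp2 x) (toP2 hpm hp2 y) := by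
  constructor
  · intro hxy
    constructor
    · intro j
      rcases le_or_gt j n₁ with hj | hj
      · rw [← initSeg_low hp1 x hj, ← initSeg_low hp1 y hj]
        exact hxy j
      · rw [initSeg_saturate (toP1 hp1 x).col (by omega : n₁ ≤ j),
          initSeg_saturate (toP1 hp1 y).col (by omega : n₁ ≤ j),
          ← initSeg_low hp1 x le_rfl, ← initSeg_low hp1 y le_rfl]
        exact hxy n₁
    · intro j
      have h := hxy (n₁ + 1 + j)
      rw [initSeg_high hpm hp2 x j, initSeg_high hpm hp2 y j] at h
      obtain ⟨-, h2⟩ := forall₂_append_split rfl h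
      rw [List.forall₂_map_left_iff, List.forall₂_map_right_iff] at h2
      exact h2.imp fun a b hab => Nat.le_of_add_le_add_right hab
  · rintro ⟨h1, h2⟩ j
    rcases le_or_gt j n₁ with hj | hj
    · rw [initSeg_low hp1 x hj, initSeg_low hp1 y hj]
      exact h1 j
    · have hj' : j = n₁ + 1 + (j - (n₁ + 1)) := by omega
      rw [hj', initSeg_high hpm hp2 x _, initSeg_high hpm hp2 y _]
      refine List.rel_append (List.forall₂_same.2 fun a _ => le_rfl) ?_
      rw [List.forall₂_map_left_iff, List.forall₂_map_right_iff]
      exact (h2 _).imp fun a b hab => Nat.add_le_add_right hab _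

theorem rook_product_aux (hp1 : ∀ i : Fin n₁, lam.part ⟨i, lt_aux₁ i⟩ = lam1.part i) (hpm : lam.part ⟨n₁, mid_lt⟩ = n₁ + 1) (hp2 : ∀ j : Fin n₂, lam.part ⟨n₁ + 1 + (j : ℕ), add_lt_aux j⟩ = lam2.part j + (n₁ + 1)) (hb : ∀ i : Fin n₁, lam1.part i ≤ n₁ + 1) :
    ∃ e : Placement lam ≃ Placement lam1 × Placement lam2,
      ∀ a b : Placement lam,
        rle a b ↔ (rle (e a).1 (e b).1 ∧ rle (e a).2 (e b).2) :=
  ⟨⟨fun x => (toP1 hp1 x, toP2 hpm hp2 x), bwd hp1 hpm hp2 hb,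
    fun x => bwd_toP hp1 hpm hp2 hb x, fun p => toP_bwd hp1 hpm hp2 hb p⟩,
    fun a b => rle_iff hp1 hpm hp2 a b⟩

end Product

/-- If the GJW sequence of `λ` is the concatenation of the GJW sequence of
`λ¹`, a single `0`, and the GJW sequence of `λ²`, then the rook poset of `λ` is isomorphic
to the product of the rook posets of `λ¹` and `λ²` (ordered componentwise). -/
theorem rookPoset_product {n₁ n₂ n : ℕ} (lam1 : Partition n₁) (lam2 : Partition n₂)
    (lam : Partition n) (h : lam.gjw = lam1.gjw ++ [0] ++ lam2.gjw) :
    ∃ e : Placement lam ≃ Placement lam1 × Placement lam2,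
      ∀ a b : Placement lam,
        rle a b ↔ (rle (e a).1 (e b).1 ∧ rle (e a).2 (e b).2) := by
  have hn : n = n₁ + 1 + n₂ := by
    have hlen := congrArg List.length h
    simp only [Partition.gjw, List.length_map, List.length_finRange, List.length_append,
      List.length_cons, List.length_nil] at hlen
    omega
  subst hn
  have hlen1 : lam1.gjw.length = n₁ := by
    simp [Partition.gjw]
  have hlen01 : (lam1.gjw ++ [0]).length = n₁ + 1 := by
    simp [Partition.gjw]
  have hL : ∀ (i : ℕ) (hi : i < n₁ + 1 + n₂),
      lam.part ⟨i, hi⟩ - (i + 1)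
        = (lam1.gjw ++ [0] ++ lam2.gjw)[i]'(by
            simp only [Partition.gjw, List.length_map, List.length_finRange,
              List.length_append, List.length_cons, List.length_nil]
            omega) := by
    intro i hi
    calc lam.part ⟨i, hi⟩ - (i + 1)
        = lam.gjw[i]'(by simpa [Partition.gjw] using hi) := by
          simp [Partition.gjw]
      _ = _ := List.getElem_of_eq h _
  have hp1 : ∀ i : Fin n₁, lam.part ⟨i, lt_aux₁ i⟩ = lam1.part i := by
    intro i
    have h1 := hL i (lt_aux₁ i)
    rw [List.getElem_append_left (by omega), List.getElem_append_left (by omega)] at h1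
    have h2 : lam1.gjw[(i : ℕ)]'(by omega) = lam1.part i - ((i : ℕ) + 1) := by
      simp [Partition.gjw]
    rw [h2] at h1
    have h3 := lam.staircase ⟨i, lt_aux₁ i⟩
    have h4 := lam1.staircase i
    simp only [] at h3
    omega
  have hpm : lam.part ⟨n₁, mid_lt⟩ = n₁ + 1 := by
    have h1 := hL n₁ mid_lt
    rw [List.getElem_append_left (by omega), List.getElem_append_right (by omega)] at h1
    have h3 := lam.staircase ⟨n₁, mid_lt⟩
    simp only [hlen1, Nat.sub_self, List.getElem_singleton] at h1
    simp only [] at h3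
    omega
  have hp2 : ∀ j : Fin n₂,
      lam.part ⟨n₁ + 1 + (j : ℕ), add_lt_aux j⟩ = lam2.part j + (n₁ + 1) := by
    intro j
    have h1 := hL (n₁ + 1 + (j : ℕ)) (add_lt_aux j)
    rw [List.getElem_append_right (by omega)] at h1
    simp only [hlen01, Nat.add_sub_cancel_left,
      show n₁ + 1 + (j : ℕ) - (n₁ + 1) = (j : ℕ) by omega] at h1
    have hjl : (j : ℕ) < lam2.gjw.length := by
      simp only [Partition.gjw, List.length_map, List.length_finRange]
      exact j.isLt
    have h2 : lam2.gjw[(j : ℕ)]'hjl = lam2.part j - ((j : ℕ) + 1) := by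
      simp [Partition.gjw]
    rw [h2] at h1
    have h3 := lam.staircase ⟨n₁ + 1 + (j : ℕ), add_lt_aux j⟩
    have h4 := lam2.staircase j
    simp only [] at h3
    omega
  have hb : ∀ i : Fin n₁, lam1.part i ≤ n₁ + 1 := by
    intro i
    calc lam1.part i = lam.part ⟨(i : ℕ), lt_aux₁ i⟩ := (hp1 i).symm
      _ ≤ lam.part ⟨n₁, mid_lt⟩ :=
          lam.mono (Fin.le_def.2 (show (i : ℕ) ≤ n₁ by omega))
      _ = n₁ + 1 := hpm
  exact rook_product_aux hp1 hpm hp2 hb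

end RookPoset
end
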